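/- arXiv:2603.25294 — 8 statements merged into one kernel-verified Lean document; each statement's English description precedes it below -/
import Mathlib

section
/- Every bounded operator T on L²(τ) satisfying T∘L_a = L_a∘T for all a ∈ A is of the form T = R_ξ for a unique ξ ∈ L^∞(τ), namely ξ = T(1); conversely, every R_ξ with ξ ∈ L^∞(τ) commutes with every L_a. Consequently {L_a : a ∈ A}′ = {R_ξ : ξ ∈ L^∞(τ)}, and symmetrically {R_a : a ∈ A}′ = {L_ξ : ξ ∈ L^∞(τ)}. -/
open scoped InnerProductSpace

/-- The set of numbers `‖ξ·a‖` over contractions `a` (w.r.t. the `L²`-norm `τ(a*a)^{1/2}`),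
whose supremum is the `L^∞`-norm of `ξ ∈ L²(τ)`.  Here `Rmul a` is the continuous extension of
right multiplication by `a`, so that `Rmul a ξ = ξ·a`. -/
def infNormSet {A H : Type*} [NormedRing A] [StarRing A] [NormedAlgebra ℂ A]
    [NormedAddCommGroup H] [InnerProductSpace ℂ H]
    (τ : A →ₗ[ℂ] ℂ) (Rmul : A → H →L[ℂ] H) (ξ : H) : Set ℝ :=
  {r : ℝ | ∃ a : A, (τ (star a * a)).re ≤ 1 ∧ r = ‖Rmul a ξ‖}

/-- `ξ ∈ L^∞(τ)`, i.e. `‖ξ‖_∞ < ∞`. -/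
def MemLinfty {A H : Type*} [NormedRing A] [StarRing A] [NormedAlgebra ℂ A]
    [NormedAddCommGroup H] [InnerProductSpace ℂ H]
    (τ : A →ₗ[ℂ] ℂ) (Rmul : A → H →L[ℂ] H) (ξ : H) : Prop :=
  BddAbove (infNormSet τ Rmul ξ)

/-- Every bounded operator `T` on `L²(τ)` commuting with all left multiplications
`L_a` is of the form `R_ξ` for a unique `ξ ∈ L^∞(τ)`, namely `ξ = T(1)`; conversely every `R_ξ`
with `ξ ∈ L^∞(τ)` commutes with every `L_a`.  Consequently `{L_a}' = {R_ξ : ξ ∈ L^∞(τ)}` and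
symmetrically `{R_a}' = {L_ξ : ξ ∈ L^∞(τ)}` (where `L_ξ(a) = ξ·a = Rmul a ξ` and
`R_ξ(a) = a·ξ = Lmul a ξ`). -/
theorem statement0
    {A H : Type*} [NormedRing A] [StarRing A] [CStarRing A] [NormedAlgebra ℂ A]
    [StarModule ℂ A] [CompleteSpace A]
    [NormedAddCommGroup H] [InnerProductSpace ℂ H] [CompleteSpace H]
    (τ : A →ₗ[ℂ] ℂ)
    (hτpos : ∀ a : A, 0 ≤ (τ (star a * a)).re ∧ (τ (star a * a)).im = 0)
    (hτone : τ 1 = 1)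
    (hτtr : ∀ a b : A, τ (a * b) = τ (b * a))
    (ι : A →ₗ[ℂ] H) (hdense : DenseRange ι)
    (hinner : ∀ a b : A, (inner ℂ (ι a) (ι b) : ℂ) = τ (star a * b))
    (Lmul Rmul : A → H →L[ℂ] H)
    (hLmul : ∀ a b : A, Lmul a (ι b) = ι (a * b))
    (hRmul : ∀ a b : A, Rmul a (ι b) = ι (b * a)) :
    (∀ T : H →L[ℂ] H, (∀ a : A, T.comp (Lmul a) = (Lmul a).comp T) →
      MemLinfty τ Rmul (T (ι 1)) ∧ (∀ a : A, T (ι a) = Lmul a (T (ι 1))) ∧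
      (∀ ξ : H, MemLinfty τ Rmul ξ → (∀ a : A, T (ι a) = Lmul a ξ) → ξ = T (ι 1))) ∧
    (∀ ξ : H, MemLinfty τ Rmul ξ → ∀ Rxi : H →L[ℂ] H, (∀ a : A, Rxi (ι a) = Lmul a ξ) →
      ∀ a : A, Rxi.comp (Lmul a) = (Lmul a).comp Rxi) ∧
    {T : H →L[ℂ] H | ∀ a : A, T.comp (Lmul a) = (Lmul a).comp T}
      = {T : H →L[ℂ] H | ∃ ξ : H, MemLinfty τ Rmul ξ ∧ ∀ a : A, T (ι a) = Lmul a ξ} ∧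
    {T : H →L[ℂ] H | ∀ a : A, T.comp (Rmul a) = (Rmul a).comp T}
      = {T : H →L[ℂ] H | ∃ ξ : H, MemLinfty τ Rmul ξ ∧ ∀ a : A, T (ι a) = Rmul a ξ} := by
  classical
  -- two continuous linear maps agreeing on the image of `ι` are equal
  have ext_clm : ∀ S₁ S₂ : H →L[ℂ] H, (∀ a : A, S₁ (ι a) = S₂ (ι a)) → S₁ = S₂ := by
    intro S₁ S₂ h
    ext x
    refine congrFun (Continuous.ext_on hdense S₁.continuous S₂.continuous ?_) x
    rintro _ ⟨a, rfl⟩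
    exact h a
  -- two vectors with same inner products against the image of `ι` are equal
  have ext_vec : ∀ v w : H, (∀ a : A, ⟪ι a, v⟫_ℂ = ⟪ι a, w⟫_ℂ) → v = w := by
    intro v w h
    have hcont1 : Continuous fun x : H => ⟪x, v⟫_ℂ :=
      Continuous.inner continuous_id continuous_const
    have hcont2 : Continuous fun x : H => ⟪x, w⟫_ℂ :=
      Continuous.inner continuous_id continuous_const
    have heq : (fun x : H => ⟪x, v⟫_ℂ) = fun x : H => ⟪x, w⟫_ℂ := by
      apply Continuous.ext_on hdense hcont1 hcont2
      rintro _ ⟨a, rfl⟩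
      exact h a
    have h2 : ⟪v - w, v⟫_ℂ = ⟪v - w, w⟫_ℂ := congrFun heq (v - w)
    have h3 : ⟪v - w, v - w⟫_ℂ = 0 := by rw [inner_sub_right, h2, sub_self]
    exact sub_eq_zero.mp (inner_self_eq_zero.mp h3)
  -- the L² norm of `ι a`
  have hnorm : ∀ a : A, ‖ι a‖ ^ 2 = (τ (star a * a)).re := by
    intro a
    have h2 : (inner ℂ (ι a) (ι a) : ℂ).re = ‖ι a‖ ^ 2 := by
      simpa using inner_self_eq_norm_sq (𝕜 := ℂ) (ι a)
    rw [← h2, hinner]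
  -- the star map is isometric on the image of `ι`
  have hstar : ∀ a : A, ‖ι (star a)‖ = ‖ι a‖ := by
    intro a
    have h1 : ‖ι (star a)‖ ^ 2 = ‖ι a‖ ^ 2 := by
      rw [hnorm, hnorm, star_star, hτtr]
    calc ‖ι (star a)‖ = Real.sqrt (‖ι (star a)‖ ^ 2) := (Real.sqrt_sq (norm_nonneg _)).symm
      _ = Real.sqrt (‖ι a‖ ^ 2) := by rw [h1]
      _ = ‖ι a‖ := Real.sqrt_sq (norm_nonneg _)
  have hLι : ∀ a : A, Lmul a (ι 1) = ι a := fun a => by rw [hLmul, mul_one]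
  have hRι : ∀ a : A, Rmul a (ι 1) = ι a := fun a => by rw [hRmul, one_mul]
  have hLone : ∀ ξ : H, Lmul 1 ξ = ξ := by
    have h : Lmul 1 = ContinuousLinearMap.id ℂ H :=
      ext_clm _ _ fun a => by rw [hLmul, one_mul]; rfl
    intro ξ; rw [h]; rfl
  have hLcomp : ∀ a b : A, Lmul (a * b) = (Lmul a).comp (Lmul b) := by
    intro a b
    apply ext_clm
    intro c
    rw [hLmul, ContinuousLinearMap.comp_apply, hLmul, hLmul, mul_assoc]
  have hRcomp : ∀ a b : A, Rmul (b * a) = (Rmul a).comp (Rmul b) := by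
    intro a b
    apply ext_clm
    intro c
    rw [hRmul, ContinuousLinearMap.comp_apply, hRmul, hRmul, mul_assoc]
  have hcontraction : ∀ a : A, (τ (star a * a)).re ≤ 1 → ‖ι a‖ ≤ 1 := by
    intro a ha
    have h := hnorm a
    nlinarith [norm_nonneg (ι a), sq_nonneg (‖ι a‖ - 1)]
  -- KEY ESTIMATE: for `T` commuting with left multiplications, `‖(T1)·a‖ ≤ ‖T‖‖a‖₂`
  have key : ∀ T : H →L[ℂ] H, (∀ a : A, T.comp (Lmul a) = (Lmul a).comp T) →
      ∀ a : A, ‖Rmul a (T (ι 1))‖ ≤ ‖T‖ * ‖ι a‖ := by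
    intro T hT a
    set ξ := T (ι 1) with hξdef
    have hTc : ∀ c : A, T (ι c) = Lmul c ξ := by
      intro c
      have h1 := ContinuousLinearMap.ext_iff.mp (hT c) (ι 1)
      simp only [ContinuousLinearMap.comp_apply] at h1
      rw [hLι] at h1
      exact h1
    -- a sequence in `A` whose image approximates `ξ`
    obtain ⟨u, hu_mem, hu_lim⟩ := mem_closure_iff_seq_limit.mp (hdense ξ)
    choose b hb using hu_mem
    have hz : Filter.Tendsto (fun n => ι (b n)) Filter.atTop (nhds ξ) := by
      have hfun : (fun n => ι (b n)) = u := funext hb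
      rw [hfun]; exact hu_lim
    have hz_cauchy : CauchySeq fun n => ι (b n) := hz.cauchySeq
    set y : ℕ → H := fun n => ι (star (b n * a)) with hydef
    have hdiff : ∀ m n : ℕ, ‖y m - y n‖ ≤ ‖Rmul a‖ * ‖ι (b m) - ι (b n)‖ := by
      intro m n
      have e1 : y m - y n = ι (star ((b m - b n) * a)) := by
        simp only [hydef, ← map_sub]
        congr 1
        rw [sub_mul, star_sub]
      have e2 : ι ((b m - b n) * a) = Rmul a (ι (b m) - ι (b n)) := by
        rw [← map_sub ι, hRmul]
      rw [e1, hstar, e2]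
      exact (Rmul a).le_opNorm _
    have hy_cauchy : CauchySeq y := by
      rw [Metric.cauchySeq_iff] at hz_cauchy ⊢
      intro ε hε
      have hC : (0 : ℝ) < ‖Rmul a‖ + 1 := by positivity
      obtain ⟨N, hN⟩ := hz_cauchy (ε / (‖Rmul a‖ + 1)) (by positivity)
      refine ⟨N, fun m hm n hn => ?_⟩
      have h1 := hdiff m n
      have h2 := hN m hm n hn
      rw [dist_eq_norm] at h2 ⊢
      calc ‖y m - y n‖ ≤ ‖Rmul a‖ * ‖ι (b m) - ι (b n)‖ := h1
        _ ≤ (‖Rmul a‖ + 1) * ‖ι (b m) - ι (b n)‖ := by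
            have := norm_nonneg (ι (b m) - ι (b n))
            nlinarith
        _ < (‖Rmul a‖ + 1) * (ε / (‖Rmul a‖ + 1)) := by
            exact mul_lt_mul_of_pos_left h2 hC
        _ = ε := by field_simp
    obtain ⟨η, hη⟩ := cauchySeq_tendsto_of_complete hy_cauchy
    -- `Rmul a ξ` is the limit of `ι (bₙ a)`
    have h3 : Filter.Tendsto (fun n => ι (b n * a)) Filter.atTop (nhds (Rmul a ξ)) := by
      have h := ((Rmul a).continuous.tendsto ξ).comp hz
      have hfun : ((Rmul a) ∘ fun n => ι (b n)) = fun n => ι (b n * a) := by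
        funext n
        simp only [Function.comp_apply, hRmul]
      rw [hfun] at h
      exact h
    -- identify the limit `η` as `T† (ι (star a))`
    have hη_id : η = ContinuousLinearMap.adjoint T (ι (star a)) := by
      apply ext_vec
      intro c
      have l1 : Filter.Tendsto (fun n => ⟪ι c, y n⟫_ℂ) Filter.atTop (nhds ⟪ι c, η⟫_ℂ) :=
        Filter.Tendsto.inner tendsto_const_nhds hη
      have l2 : ∀ n, ⟪ι c, y n⟫_ℂ = ⟪Lmul c (ι (b n)), ι (star a)⟫_ℂ := by
        intro n
        simp only [hydef]
        rw [hLmul, hinner, hinner, star_mul (b n) a, star_mul c (b n)]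
        calc τ (star c * (star a * star (b n)))
            = τ (star c * star a * star (b n)) := by rw [mul_assoc]
          _ = τ (star (b n) * (star c * star a)) := hτtr _ _
          _ = τ (star (b n) * star c * star a) := by rw [mul_assoc]
      have l3 : Filter.Tendsto (fun n => ⟪Lmul c (ι (b n)), ι (star a)⟫_ℂ) Filter.atTop
          (nhds ⟪Lmul c ξ, ι (star a)⟫_ℂ) := by
        have h := ((Lmul c).continuous.tendsto ξ).comp hz
        exact Filter.Tendsto.inner h tendsto_const_nhds
      have l1' : Filter.Tendsto (fun n => ⟪Lmul c (ι (b n)), ι (star a)⟫_ℂ) Filter.atTop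
          (nhds ⟪ι c, η⟫_ℂ) := by
        have hfun : (fun n => ⟪ι c, y n⟫_ℂ)
            = fun n => ⟪Lmul c (ι (b n)), ι (star a)⟫_ℂ := funext l2
        rw [← hfun]
        exact l1
      have l4 : ⟪ι c, η⟫_ℂ = ⟪Lmul c ξ, ι (star a)⟫_ℂ := tendsto_nhds_unique l1' l3
      rw [l4, ContinuousLinearMap.adjoint_inner_right, hTc]
    -- conclude
    have h4 : Filter.Tendsto (fun n => ‖ι (b n * a)‖) Filter.atTop (nhds ‖Rmul a ξ‖) := h3.norm
    have h5 : Filter.Tendsto (fun n => ‖y n‖) Filter.atTop (nhds ‖η‖) := hη.norm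
    have h4' : Filter.Tendsto (fun n => ‖y n‖) Filter.atTop (nhds ‖Rmul a ξ‖) := by
      have hfun : (fun n => ‖y n‖) = fun n => ‖ι (b n * a)‖ := by
        funext n
        simp only [hydef]
        exact hstar (b n * a)
      rw [hfun]
      exact h4
    have h7 : ‖Rmul a ξ‖ = ‖η‖ := tendsto_nhds_unique h4' h5
    rw [h7, hη_id]
    calc ‖ContinuousLinearMap.adjoint T (ι (star a))‖
        ≤ ‖ContinuousLinearMap.adjoint T‖ * ‖ι (star a)‖ :=
          (ContinuousLinearMap.adjoint T).le_opNorm _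
      _ = ‖T‖ * ‖ι a‖ := by rw [ContinuousLinearMap.adjoint.norm_map, hstar]
  -- any operator acting as `a ↦ a·ξ` on the image of `ι` commutes with left multiplications
  have commL : ∀ (S : H →L[ℂ] H) (ξ : H), (∀ a : A, S (ι a) = Lmul a ξ) →
      ∀ a : A, S.comp (Lmul a) = (Lmul a).comp S := by
    intro S ξ hS a
    apply ext_clm
    intro c
    simp only [ContinuousLinearMap.comp_apply]
    rw [hLmul, hS, hS, hLcomp a c]
    rfl
  have commR : ∀ (S : H →L[ℂ] H) (ξ : H), (∀ a : A, S (ι a) = Rmul a ξ) →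
      ∀ a : A, S.comp (Rmul a) = (Rmul a).comp S := by
    intro S ξ hS a
    apply ext_clm
    intro c
    simp only [ContinuousLinearMap.comp_apply]
    rw [hRmul, hS, hS, hRcomp a c]
    rfl
  -- the first statement
  have part1 : ∀ T : H →L[ℂ] H, (∀ a : A, T.comp (Lmul a) = (Lmul a).comp T) →
      MemLinfty τ Rmul (T (ι 1)) ∧ (∀ a : A, T (ι a) = Lmul a (T (ι 1))) ∧
      (∀ ξ : H, MemLinfty τ Rmul ξ → (∀ a : A, T (ι a) = Lmul a ξ) → ξ = T (ι 1)) := by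
    intro T hT
    have hTc : ∀ c : A, T (ι c) = Lmul c (T (ι 1)) := by
      intro c
      have h1 := ContinuousLinearMap.ext_iff.mp (hT c) (ι 1)
      simp only [ContinuousLinearMap.comp_apply] at h1
      rw [hLι] at h1
      exact h1
    refine ⟨⟨‖T‖, ?_⟩, hTc, ?_⟩
    · rintro r ⟨a, ha, rfl⟩
      calc ‖Rmul a (T (ι 1))‖ ≤ ‖T‖ * ‖ι a‖ := key T hT a
        _ ≤ ‖T‖ * 1 := mul_le_mul_of_nonneg_left (hcontraction a ha) (norm_nonneg T)
        _ = ‖T‖ := mul_one _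
    · intro ξ _ hξ
      have h := hξ 1
      rw [hLone] at h
      exact h.symm
  refine ⟨part1, fun ξ _ Rxi hRxi a => commL Rxi ξ hRxi a, ?_, ?_⟩
  · ext T
    simp only [Set.mem_setOf_eq]
    constructor
    · intro hT
      exact ⟨T (ι 1), (part1 T hT).1, (part1 T hT).2.1⟩
    · rintro ⟨ξ, _, hξ⟩
      exact commL T ξ hξ
  · ext T
    simp only [Set.mem_setOf_eq]
    constructor
    · intro hT
      have hTa : ∀ a : A, T (ι a) = Rmul a (T (ι 1)) := by
        intro a
        have h1 := ContinuousLinearMap.ext_iff.mp (hT a) (ι 1)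
        simp only [ContinuousLinearMap.comp_apply] at h1
        rw [hRι] at h1
        exact h1
      refine ⟨T (ι 1), ⟨‖T‖, ?_⟩, hTa⟩
      rintro r ⟨a, ha, rfl⟩
      rw [← hTa a]
      calc ‖T (ι a)‖ ≤ ‖T‖ * ‖ι a‖ := T.le_opNorm _
        _ ≤ ‖T‖ * 1 := mul_le_mul_of_nonneg_left (hcontraction a ha) (norm_nonneg T)
        _ = ‖T‖ := mul_one _
    · rintro ⟨ξ, _, hξ⟩
      exact commR T ξ hξ
end

section
/- The bicommutant identities {L_a : a ∈ A}″ = {L_ξ : ξ ∈ L^∞(τ)} = {R_ξ : ξ ∈ L^∞(τ)}′ and {R_a : a ∈ A}″ = {R_ξ : ξ ∈ L^∞(τ)} = {L_ξ : ξ ∈ L^∞(τ)}′ hold in B(L²(τ)). In particular, {L_ξ : ξ ∈ L^∞(τ)} and {R_ξ : ξ ∈ L^∞(τ)} are von Neumann algebras (weakly closed unital *-subalgebras equal to their bicommutants). -/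
open scoped InnerProductSpace

/-- The bicommutant identities
`{L_a : a ∈ A}″ = {L_ξ : ξ ∈ L^∞(τ)} = {R_ξ : ξ ∈ L^∞(τ)}′` and
`{R_a : a ∈ A}″ = {R_ξ : ξ ∈ L^∞(τ)} = {L_ξ : ξ ∈ L^∞(τ)}′` hold in `B(L²(τ))`; in particular
both `{L_ξ}` and `{R_ξ}` are equal to their own bicommutants.  Commutants are taken with respect
to composition of continuous linear maps (the multiplication of the ring `H →L[ℂ] H`), i.e. via
`Set.centralizer`.  Here `L_ξ` is the bounded operator determined by `L_ξ(ι a) = ξ·a = Rmul a ξ`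
and `R_ξ` the one determined by `R_ξ(ι a) = a·ξ = Lmul a ξ`. -/
theorem statement1
    {A H : Type*} [NormedRing A] [StarRing A] [CStarRing A] [NormedAlgebra ℂ A]
    [StarModule ℂ A] [CompleteSpace A]
    [NormedAddCommGroup H] [InnerProductSpace ℂ H] [CompleteSpace H]
    (τ : A →ₗ[ℂ] ℂ)
    (hτpos : ∀ a : A, 0 ≤ (τ (star a * a)).re ∧ (τ (star a * a)).im = 0)
    (hτone : τ 1 = 1)
    (hτtr : ∀ a b : A, τ (a * b) = τ (b * a))
    (ι : A →ₗ[ℂ] H) (hdense : DenseRange ι)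
    (hinner : ∀ a b : A, (inner ℂ (ι a) (ι b) : ℂ) = τ (star a * b))
    (Lmul Rmul : A → H →L[ℂ] H)
    (hLmul : ∀ a b : A, Lmul a (ι b) = ι (a * b))
    (hRmul : ∀ a b : A, Rmul a (ι b) = ι (b * a))
    (Lset Rset : Set (H →L[ℂ] H))
    (hLset : Lset = {T : H →L[ℂ] H | ∃ ξ : H, MemLinfty τ Rmul ξ ∧ ∀ a : A, T (ι a) = Rmul a ξ})
    (hRset : Rset = {T : H →L[ℂ] H | ∃ ξ : H, MemLinfty τ Rmul ξ ∧ ∀ a : A, T (ι a) = Lmul a ξ}) :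
    Set.centralizer (Set.centralizer (Set.range Lmul)) = Lset ∧
    Lset = Set.centralizer Rset ∧
    Set.centralizer (Set.centralizer (Set.range Rmul)) = Rset ∧
    Rset = Set.centralizer Lset ∧
    Set.centralizer (Set.centralizer Lset) = Lset ∧
    Set.centralizer (Set.centralizer Rset) = Rset := by
  classical
  open Filter ContinuousLinearMap in
  -- basic norm computations
  have hnormsq : ∀ a : A, ‖ι a‖ ^ 2 = (τ (star a * a)).re := by
    intro a
    have h1 : RCLike.re (inner ℂ (ι a) (ι a) : ℂ) = ‖ι a‖ ^ 2 := inner_self_eq_norm_sq (ι a)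
    rw [hinner a a] at h1
    simpa using h1.symm
  have hnorm_star : ∀ a : A, ‖ι (star a)‖ = ‖ι a‖ := by
    intro a
    have h1 : ‖ι (star a)‖ ^ 2 = ‖ι a‖ ^ 2 := by
      rw [hnormsq, hnormsq, star_star, hτtr]
    calc ‖ι (star a)‖ = Real.sqrt (‖ι (star a)‖ ^ 2) := (Real.sqrt_sq (norm_nonneg _)).symm
      _ = Real.sqrt (‖ι a‖ ^ 2) := by rw [h1]
      _ = ‖ι a‖ := Real.sqrt_sq (norm_nonneg _)
  have hdist_star : ∀ a b : A, dist (ι (star a)) (ι (star b)) = dist (ι a) (ι b) := by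
    intro a b
    rw [dist_eq_norm, dist_eq_norm, ← map_sub, ← map_sub, ← star_sub, hnorm_star]
  -- the conjugation J on H extending a ↦ ι (star a)
  have hex : ∀ x : H, ∃ u : ℕ → A, Filter.Tendsto (fun n => ι (u n)) Filter.atTop (nhds x) := by
    intro x
    have h : ∀ n : ℕ, ∃ a : A, dist x (ι a) < 1 / (n + 1) := fun n =>
      hdense.exists_dist_lt x (by positivity)
    choose u hu using h
    refine ⟨u, tendsto_iff_dist_tendsto_zero.2 ?_⟩
    refine squeeze_zero (fun n => dist_nonneg) (fun n => ?_) tendsto_one_div_add_atTop_nhds_zero_nat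
    rw [dist_comm]; exact (hu n).le
  choose u hu using hex
  have hcauchy : ∀ x : H, ∃ y : H,
      Filter.Tendsto (fun n => ι (star (u x n))) Filter.atTop (nhds y) := by
    intro x
    apply cauchySeq_tendsto_of_complete
    have h1 : CauchySeq (fun n => ι (u x n)) := (hu x).cauchySeq
    rw [Metric.cauchySeq_iff] at h1 ⊢
    intro ε hε
    obtain ⟨N, hN⟩ := h1 ε hε
    exact ⟨N, fun m hm n hn => by rw [hdist_star]; exact hN m hm n hn⟩
  choose J hJ using hcauchy
  have hJlim : ∀ (x : H) (v : ℕ → A),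
      Filter.Tendsto (fun n => ι (v n)) Filter.atTop (nhds x) →
      Filter.Tendsto (fun n => ι (star (v n))) Filter.atTop (nhds (J x)) := by
    intro x v hv
    rw [tendsto_iff_dist_tendsto_zero]
    have t1 : Filter.Tendsto (fun n => dist (ι (v n)) (ι (u x n)) +
        dist (ι (star (u x n))) (J x)) Filter.atTop (nhds 0) := by
      have a1 : Filter.Tendsto (fun n => dist (ι (v n)) (ι (u x n)))
          Filter.atTop (nhds (dist x x)) := hv.dist (hu x)
      have a2 := tendsto_iff_dist_tendsto_zero.1 (hJ x)
      simpa using a1.add a2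
    refine squeeze_zero (fun n => dist_nonneg) (fun n => ?_) t1
    calc dist (ι (star (v n))) (J x)
        ≤ dist (ι (star (v n))) (ι (star (u x n))) + dist (ι (star (u x n))) (J x) :=
          dist_triangle _ _ _
      _ = dist (ι (v n)) (ι (u x n)) + dist (ι (star (u x n))) (J x) := by rw [hdist_star]
  have hJι : ∀ b : A, J (ι b) = ι (star b) := by
    intro b
    exact tendsto_nhds_unique (hJlim (ι b) (fun _ => b) tendsto_const_nhds) tendsto_const_nhds
  have hJcont : Continuous J := by
    refine (Isometry.of_dist_eq fun x y => ?_).continuous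
    have t1 : Filter.Tendsto (fun n => dist (ι (star (u x n))) (ι (star (u y n))))
        Filter.atTop (nhds (dist (J x) (J y))) := (hJ x).dist (hJ y)
    have t2 : Filter.Tendsto (fun n => dist (ι (star (u x n))) (ι (star (u y n))))
        Filter.atTop (nhds (dist x y)) := by
      have := (hu x).dist (hu y)
      simpa [hdist_star] using this
    exact tendsto_nhds_unique t1 t2
  -- extensionality
  have ext_op : ∀ T S : H →L[ℂ] H, (∀ a : A, T (ι a) = S (ι a)) → T = S := by
    intro T S h
    ext x
    exact hdense.induction_on x (isClosed_eq T.continuous S.continuous) h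
  have ext_vec : ∀ v w : H, (∀ d : A, (inner ℂ (ι d) v : ℂ) = inner ℂ (ι d) w) → v = w := by
    intro v w h
    refine ext_inner_left ℂ fun x => ?_
    refine hdense.induction_on x (isClosed_eq ?_ ?_) h
    · exact Continuous.inner continuous_id continuous_const
    · exact Continuous.inner continuous_id continuous_const
  -- inner ℂ product adjoint moves
  have innL : ∀ (a : A) (x y : H), (inner ℂ (Lmul a x) y : ℂ) = inner ℂ x (Lmul (star a) y) := by
    intro a x y
    refine hdense.induction_on₂
      (p := fun x y => (inner ℂ (Lmul a x) y : ℂ) = inner ℂ x (Lmul (star a) y)) ?_ ?_ x y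
    · apply isClosed_eq
      · exact Continuous.inner ((Lmul a).continuous.comp continuous_fst) continuous_snd
      · exact Continuous.inner continuous_fst ((Lmul (star a)).continuous.comp continuous_snd)
    · intro b c
      rw [hLmul, hLmul, hinner, hinner, star_mul, mul_assoc]
  have innR : ∀ (a : A) (x y : H), (inner ℂ (Rmul a x) y : ℂ) = inner ℂ x (Rmul (star a) y) := by
    intro a x y
    refine hdense.induction_on₂
      (p := fun x y => (inner ℂ (Rmul a x) y : ℂ) = inner ℂ x (Rmul (star a) y)) ?_ ?_ x y
    · apply isClosed_eq
      · exact Continuous.inner ((Rmul a).continuous.comp continuous_fst) continuous_snd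
      · exact Continuous.inner continuous_fst ((Rmul (star a)).continuous.comp continuous_snd)
    · intro b c
      rw [hRmul, hRmul, hinner, hinner, star_mul]
      have h1 : star a * star b * c = star a * (star b * c) := by rw [mul_assoc]
      have h2 : star b * (c * star a) = (star b * c) * star a := by rw [mul_assoc]
      rw [h1, h2, hτtr]
  -- compositions and commutation of elementary operators
  have Lcomp : ∀ a b : A, Lmul (a * b) = Lmul a * Lmul b := by
    intro a b
    refine ext_op _ _ fun c => ?_
    rw [ContinuousLinearMap.mul_apply, hLmul, hLmul, hLmul, mul_assoc]
  have Rcomp : ∀ a b : A, Rmul (a * b) = Rmul b * Rmul a := by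
    intro a b
    refine ext_op _ _ fun c => ?_
    rw [ContinuousLinearMap.mul_apply, hRmul, hRmul, hRmul, mul_assoc]
  have LRcomm : ∀ a b : A, Lmul a * Rmul b = Rmul b * Lmul a := by
    intro a b
    refine ext_op _ _ fun c => ?_
    rw [ContinuousLinearMap.mul_apply, ContinuousLinearMap.mul_apply, hLmul, hRmul, hRmul,
      hLmul, mul_assoc]
  -- commutant elements are given by their value at ι 1
  have hCRval : ∀ T : H →L[ℂ] H, T ∈ Set.centralizer (Set.range Rmul) →
      ∀ a : A, T (ι a) = Rmul a (T (ι 1)) := by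
    intro T hT a
    have h1 : Rmul a * T = T * Rmul a := hT (Rmul a) ⟨a, rfl⟩
    have h2 : ι a = Rmul a (ι 1) := by rw [hRmul, one_mul]
    calc T (ι a) = T (Rmul a (ι 1)) := by rw [← h2]
      _ = (T * Rmul a) (ι 1) := rfl
      _ = (Rmul a * T) (ι 1) := by rw [h1]
      _ = Rmul a (T (ι 1)) := rfl
  have hCLval : ∀ S : H →L[ℂ] H, S ∈ Set.centralizer (Set.range Lmul) →
      ∀ a : A, S (ι a) = Lmul a (S (ι 1)) := by
    intro S hS a
    have h1 : Lmul a * S = S * Lmul a := hS (Lmul a) ⟨a, rfl⟩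
    have h2 : ι a = Lmul a (ι 1) := by rw [hLmul, mul_one]
    calc S (ι a) = S (Lmul a (ι 1)) := by rw [← h2]
      _ = (S * Lmul a) (ι 1) := rfl
      _ = (Lmul a * S) (ι 1) := by rw [h1]
      _ = Lmul a (S (ι 1)) := rfl
  -- norm bound via inner ℂ products against the dense range
  have nb : ∀ (v : H) (C : ℝ), 0 ≤ C → (∀ b : A, ‖(inner ℂ (ι b) v : ℂ)‖ ≤ C * ‖ι b‖) →
      ‖v‖ ≤ C := by
    intro v C hC h
    have hall : ∀ x : H, ‖(inner ℂ x v : ℂ)‖ ≤ C * ‖x‖ := by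
      intro x
      refine hdense.induction_on x ?_ h
      exact isClosed_le (Continuous.norm (Continuous.inner continuous_id continuous_const))
        (continuous_const.mul continuous_norm)
    have h1 : ‖v‖ ^ 2 ≤ C * ‖v‖ := by
      have h2 : RCLike.re (inner ℂ v v : ℂ) = ‖v‖ ^ 2 := inner_self_eq_norm_sq v
      have h3 : RCLike.re (inner ℂ v v : ℂ) ≤ ‖(inner ℂ v v : ℂ)‖ := RCLike.re_le_norm _
      calc ‖v‖ ^ 2 = RCLike.re (inner ℂ v v : ℂ) := h2.symm
        _ ≤ ‖(inner ℂ v v : ℂ)‖ := h3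
        _ ≤ C * ‖v‖ := hall v
    rcases eq_or_lt_of_le (norm_nonneg v) with h0 | h0
    · rw [← h0]; exact hC
    · nlinarith
  -- boundedness of contraction images
  have hι_le_one : ∀ a : A, (τ (star a * a)).re ≤ 1 → ‖ι a‖ ≤ 1 := by
    intro a ha
    have h1 : ‖ι a‖ ^ 2 ≤ 1 := by rw [hnormsq]; exact ha
    nlinarith [norm_nonneg (ι a)]
  -- membership descriptions
  have hMemCR : ∀ T : H →L[ℂ] H, T ∈ Set.centralizer (Set.range Rmul) →
      MemLinfty τ Rmul (T (ι 1)) := by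
    intro T hT
    refine ⟨‖T‖, fun r hr => ?_⟩
    obtain ⟨a, ha, rfl⟩ := hr
    have h1 : Rmul a (T (ι 1)) = T (ι a) := (hCRval T hT a).symm
    rw [h1]
    calc ‖T (ι a)‖ ≤ ‖T‖ * ‖ι a‖ := T.le_opNorm _
      _ ≤ ‖T‖ * 1 := by
          exact mul_le_mul_of_nonneg_left (hι_le_one a ha) (norm_nonneg T)
      _ = ‖T‖ := mul_one _
  have hMemCL : ∀ S : H →L[ℂ] H, S ∈ Set.centralizer (Set.range Lmul) →
      MemLinfty τ Rmul (S (ι 1)) := by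
    intro S hS
    refine ⟨‖S‖, fun r hr => ?_⟩
    obtain ⟨a, ha, rfl⟩ := hr
    refine nb _ _ (norm_nonneg S) fun b => ?_
    have key : (inner ℂ (ι b) (Rmul a (S (ι 1))) : ℂ) = inner ℂ (ι (star a)) (S (ι (star b))) := by
      have e1 : (inner ℂ (ι b) (Rmul a (S (ι 1))) : ℂ)
          = inner ℂ (Rmul (star a) (ι b)) (S (ι 1)) := by
        rw [innR (star a), star_star]
      have e2 : Rmul (star a) (ι b) = Lmul b (ι (star a)) := by
        rw [hRmul, hLmul]
      have e3 : Lmul (star b) (S (ι 1)) = S (ι (star b)) := by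
        have h1 : Lmul (star b) * S = S * Lmul (star b) := hS (Lmul (star b)) ⟨star b, rfl⟩
        calc Lmul (star b) (S (ι 1)) = (Lmul (star b) * S) (ι 1) := rfl
          _ = (S * Lmul (star b)) (ι 1) := by rw [h1]
          _ = S (Lmul (star b) (ι 1)) := rfl
          _ = S (ι (star b)) := by rw [hLmul, mul_one]
      rw [e1, e2, innL b, e3]
    rw [key]
    calc ‖(inner ℂ (ι (star a)) (S (ι (star b))) : ℂ)‖
        ≤ ‖ι (star a)‖ * ‖S (ι (star b))‖ := norm_inner_le_norm _ _
      _ ≤ ‖ι (star a)‖ * (‖S‖ * ‖ι (star b)‖) := by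
          exact mul_le_mul_of_nonneg_left (S.le_opNorm _) (norm_nonneg _)
      _ = ‖ι a‖ * (‖S‖ * ‖ι b‖) := by rw [hnorm_star, hnorm_star]
      _ ≤ 1 * (‖S‖ * ‖ι b‖) := by
          refine mul_le_mul_of_nonneg_right (hι_le_one a ha) ?_
          positivity
      _ = ‖S‖ * ‖ι b‖ := one_mul _
  -- Lset and Rset are the commutants of the elementary right/left multiplications
  have hE1 : Lset = Set.centralizer (Set.range Rmul) := by
    rw [hLset]
    ext T
    constructor
    · rintro ⟨ξ, -, hξ⟩ X ⟨b, rfl⟩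
      refine ext_op _ _ fun c => ?_
      rw [ContinuousLinearMap.mul_apply, ContinuousLinearMap.mul_apply, hξ c, hRmul]
      have h1 : T (ι (c * b)) = Rmul (c * b) ξ := hξ (c * b)
      rw [h1, Rcomp, ContinuousLinearMap.mul_apply]
    · intro hT
      exact ⟨T (ι 1), hMemCR T hT, hCRval T hT⟩
  have hE2 : Rset = Set.centralizer (Set.range Lmul) := by
    rw [hRset]
    ext S
    constructor
    · rintro ⟨η, -, hη⟩ X ⟨b, rfl⟩
      refine ext_op _ _ fun c => ?_
      rw [ContinuousLinearMap.mul_apply, ContinuousLinearMap.mul_apply, hη c, hLmul]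
      have h1 : S (ι (b * c)) = Lmul (b * c) η := hη (b * c)
      rw [h1, Lcomp, ContinuousLinearMap.mul_apply]
    · intro hS
      exact ⟨S (ι 1), hMemCL S hS, hCLval S hS⟩
  -- the key commutation lemma
  have lemX : ∀ (T : H →L[ℂ] H) (ξ : H), (∀ c : A, T (ι c) = Rmul c ξ) →
      ∀ (a d : A) (y : H),
      (inner ℂ (ι d) (T (Lmul a y)) : ℂ) = inner ℂ (Lmul d (J y)) (Rmul a ξ) := by
    intro T ξ hT a d y
    refine hdense.induction_on y ?_ ?_
    · apply isClosed_eq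
      · exact Continuous.inner continuous_const
          (T.continuous.comp (Lmul a).continuous)
      · exact Continuous.inner ((Lmul d).continuous.comp hJcont) continuous_const
    · intro b
      rw [hLmul, hT (a * b), Rcomp, hJι]
      have e1 : (inner ℂ (ι d) (Rmul b (Rmul a ξ)) : ℂ)
          = inner ℂ (Rmul (star b) (ι d)) (Rmul a ξ) := by
        rw [innR (star b), star_star]
      rw [ContinuousLinearMap.mul_apply, e1, hRmul]
      congr 1
      rw [hLmul]
  have lemY : ∀ (S : H →L[ℂ] H) (η : H), (∀ c : A, S (ι c) = Lmul c η) →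
      ∀ (a d : A) (y : H),
      (inner ℂ (ι d) (S (Rmul a y)) : ℂ) = inner ℂ (Rmul d (J y)) (Lmul a η) := by
    intro S η hS a d y
    refine hdense.induction_on y ?_ ?_
    · apply isClosed_eq
      · exact Continuous.inner continuous_const
          (S.continuous.comp (Rmul a).continuous)
      · exact Continuous.inner ((Rmul d).continuous.comp hJcont) continuous_const
    · intro c
      rw [hRmul, hS (c * a), Lcomp, hJι]
      have e1 : (inner ℂ (ι d) (Lmul c (Lmul a η)) : ℂ)
          = inner ℂ (Lmul (star c) (ι d)) (Lmul a η) := by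
        rw [innL (star c), star_star]
      rw [ContinuousLinearMap.mul_apply, e1, hLmul]
      congr 1
      rw [hRmul]
  have lemZ : ∀ (a d : A) (x y : H),
      (inner ℂ (Lmul d (J y)) (Rmul a x) : ℂ) = inner ℂ (Rmul d (J x)) (Lmul a y) := by
    intro a d x y
    refine hdense.induction_on₂ (p := fun x y =>
      (inner ℂ (Lmul d (J y)) (Rmul a x) : ℂ) = inner ℂ (Rmul d (J x)) (Lmul a y)) ?_ ?_ x y
    · apply isClosed_eq
      · exact Continuous.inner ((Lmul d).continuous.comp (hJcont.comp continuous_snd))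
          ((Rmul a).continuous.comp continuous_fst)
      · exact Continuous.inner ((Rmul d).continuous.comp (hJcont.comp continuous_fst))
          ((Lmul a).continuous.comp continuous_snd)
    · intro c b
      rw [hJι, hJι, hLmul, hRmul, hRmul, hLmul, hinner, hinner, star_mul, star_mul, star_star,
        star_star]
      rw [mul_assoc b, hτtr]
      congr 1
      rw [mul_assoc (star d) c, mul_assoc (star d) (c * a), mul_assoc c]
  have hCOMM : ∀ T ∈ Set.centralizer (Set.range Rmul), ∀ S ∈ Set.centralizer (Set.range Lmul),
      T * S = S * T := by
    intro T hT S hS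
    refine ext_op _ _ fun a => ?_
    rw [ContinuousLinearMap.mul_apply, ContinuousLinearMap.mul_apply]
    refine ext_vec _ _ fun d => ?_
    have hTv : ∀ c : A, T (ι c) = Rmul c (T (ι 1)) := hCRval T hT
    have hSv : ∀ c : A, S (ι c) = Lmul c (S (ι 1)) := hCLval S hS
    calc (inner ℂ (ι d) (T (S (ι a))) : ℂ)
        = inner ℂ (ι d) (T (Lmul a (S (ι 1)))) := by rw [hSv a]
      _ = inner ℂ (Lmul d (J (S (ι 1)))) (Rmul a (T (ι 1))) := lemX T _ hTv a d _
      _ = inner ℂ (Rmul d (J (T (ι 1)))) (Lmul a (S (ι 1))) := lemZ a d _ _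
      _ = inner ℂ (ι d) (S (Rmul a (T (ι 1)))) := (lemY S _ hSv a d _).symm
      _ = inner ℂ (ι d) (S (T (ι a))) := by rw [hTv a]
  -- assembling the commutant identities
  have hLsub : Set.range Lmul ⊆ Set.centralizer (Set.range Rmul) := by
    rintro X ⟨a, rfl⟩ Y ⟨b, rfl⟩
    exact (LRcomm a b).symm
  have hRsub : Set.range Rmul ⊆ Set.centralizer (Set.range Lmul) := by
    rintro X ⟨a, rfl⟩ Y ⟨b, rfl⟩
    exact LRcomm b a
  have hc1 : Set.centralizer (Set.centralizer (Set.range Lmul))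
      = Set.centralizer (Set.range Rmul) := by
    apply Set.Subset.antisymm
    · exact Set.centralizer_subset hRsub
    · intro T hT S hS
      exact (hCOMM T hT S hS).symm
  have hc2 : Set.centralizer (Set.centralizer (Set.range Rmul))
      = Set.centralizer (Set.range Lmul) := by
    apply Set.Subset.antisymm
    · exact Set.centralizer_subset hLsub
    · intro S hS T hT
      exact hCOMM T hT S hS
  refine ⟨?_, ?_, ?_, ?_, ?_, ?_⟩
  · rw [hE1, hc1]
  · rw [hE1, hE2, hc1.symm]
  · rw [hE2, hc2]
  · rw [hE2, hE1, hc2.symm]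
  · rw [hE1, hc2, hc1]
  · rw [hE2, hc1, hc2]
end

section
/- Equipped with the product ξη := L_ξ(η), the involution ξ ↦ ξ*, the unit given by the image of 1 ∈ A, and the norm ‖·‖_∞, the space L^∞(τ) is a unital C*-algebra: the product is associative and bilinear, (ξη)* = η*ξ*, the norm ‖·‖_∞ is complete and submultiplicative, and the C*-identity ‖ξ*ξ‖_∞ = ‖ξ‖_∞² holds for all ξ ∈ L^∞(τ). -/
open scoped InnerProductSpace

/-- The `L^∞`-norm `‖ξ‖_∞` of `ξ ∈ L²(τ)`. -/
noncomputable def infNorm {A H : Type*} [NormedRing A] [StarRing A] [NormedAlgebra ℂ A]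
    [NormedAddCommGroup H] [InnerProductSpace ℂ H]
    (τ : A →ₗ[ℂ] ℂ) (Rmul : A → H →L[ℂ] H) (ξ : H) : ℝ :=
  sSup (infNormSet τ Rmul ξ)

/-- Equipped with the product `ξη := L_ξ(η)` (where `L_ζ`, for `ζ ∈ L^∞(τ)`, is
the bounded operator determined by `L_ζ(ι a) = ζ·a = Rmul a ζ`), the involution `ξ ↦ ξ* = J ξ`,
the unit `ι 1`, and the norm `‖·‖_∞`, the space `L^∞(τ)` is a unital C*-algebra: the product is
associative and bilinear, `(ξη)* = η*ξ*`, the norm `‖·‖_∞` is a complete and submultiplicative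
norm, and the C*-identity `‖ξ*ξ‖_∞ = ‖ξ‖_∞²` holds. -/
theorem statement5
    {A H : Type*} [NormedRing A] [StarRing A] [CStarRing A] [NormedAlgebra ℂ A]
    [StarModule ℂ A] [CompleteSpace A]
    [NormedAddCommGroup H] [InnerProductSpace ℂ H] [CompleteSpace H]
    (τ : A →ₗ[ℂ] ℂ)
    (hτpos : ∀ a : A, 0 ≤ (τ (star a * a)).re ∧ (τ (star a * a)).im = 0)
    (hτone : τ 1 = 1)
    (hτtr : ∀ a b : A, τ (a * b) = τ (b * a))
    (ι : A →ₗ[ℂ] H) (hdense : DenseRange ι)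
    (hinner : ∀ a b : A, (inner ℂ (ι a) (ι b) : ℂ) = τ (star a * b))
    (Lmul Rmul : A → H →L[ℂ] H)
    (hLmul : ∀ a b : A, Lmul a (ι b) = ι (a * b))
    (hRmul : ∀ a b : A, Rmul a (ι b) = ι (b * a))
    (J : H → H)
    (hJadd : ∀ ξ η : H, J (ξ + η) = J ξ + J η)
    (hJsmul : ∀ (c : ℂ) (ξ : H), J (c • ξ) = star c • J ξ)
    (hJiso : ∀ ξ : H, ‖J ξ‖ = ‖ξ‖)
    (hJinv : ∀ ξ : H, J (J ξ) = ξ)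
    (hJstar : ∀ a : A, J (ι a) = ι (star a)) :
    -- the product is bilinear: linear in the right variable …
    (∀ ξ : H, MemLinfty τ Rmul ξ → ∀ Lxi : H →L[ℂ] H, (∀ a : A, Lxi (ι a) = Rmul a ξ) →
      ∀ (c d : ℂ) (η ζ : H), Lxi (c • η + d • ζ) = c • Lxi η + d • Lxi ζ) ∧
    -- … and linear in the left variable
    (∀ ξ η : H, MemLinfty τ Rmul ξ → MemLinfty τ Rmul η →
      ∀ Lxi Leta Lcomb : H →L[ℂ] H,
        (∀ a : A, Lxi (ι a) = Rmul a ξ) → (∀ a : A, Leta (ι a) = Rmul a η) →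
        ∀ c d : ℂ, (∀ a : A, Lcomb (ι a) = Rmul a (c • ξ + d • η)) →
        ∀ ζ : H, Lcomb ζ = c • Lxi ζ + d • Leta ζ) ∧
    -- the product is associative: (ξη)ζ = ξ(ηζ)
    (∀ ξ η ζ : H, MemLinfty τ Rmul ξ → MemLinfty τ Rmul η → MemLinfty τ Rmul ζ →
      ∀ Lxi Leta Lprod : H →L[ℂ] H,
        (∀ a : A, Lxi (ι a) = Rmul a ξ) → (∀ a : A, Leta (ι a) = Rmul a η) →
        (∀ a : A, Lprod (ι a) = Rmul a (Lxi η)) →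
        Lprod ζ = Lxi (Leta ζ)) ∧
    -- the involution is an anti-homomorphism: (ξη)* = η*ξ*
    (∀ ξ η : H, MemLinfty τ Rmul ξ → MemLinfty τ Rmul η →
      ∀ Lxi Lseta : H →L[ℂ] H,
        (∀ a : A, Lxi (ι a) = Rmul a ξ) → (∀ a : A, Lseta (ι a) = Rmul a (J η)) →
        J (Lxi η) = Lseta (J ξ)) ∧
    -- the image of 1 ∈ A is a unit
    (MemLinfty τ Rmul (ι 1) ∧
      (∀ Lone : H →L[ℂ] H, (∀ a : A, Lone (ι a) = Rmul a (ι 1)) → ∀ ξ : H, Lone ξ = ξ) ∧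
      (∀ ξ : H, MemLinfty τ Rmul ξ → ∀ Lxi : H →L[ℂ] H,
        (∀ a : A, Lxi (ι a) = Rmul a ξ) → Lxi (ι 1) = ξ)) ∧
    -- ‖·‖_∞ is a norm on L^∞(τ) …
    (∀ ξ η : H, MemLinfty τ Rmul ξ → MemLinfty τ Rmul η →
      MemLinfty τ Rmul (ξ + η) ∧
      infNorm τ Rmul (ξ + η) ≤ infNorm τ Rmul ξ + infNorm τ Rmul η) ∧
    (∀ (c : ℂ) (ξ : H), MemLinfty τ Rmul ξ →
      MemLinfty τ Rmul (c • ξ) ∧ infNorm τ Rmul (c • ξ) = ‖c‖ * infNorm τ Rmul ξ) ∧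
    (∀ ξ : H, MemLinfty τ Rmul ξ → 0 ≤ infNorm τ Rmul ξ ∧ (infNorm τ Rmul ξ = 0 → ξ = 0)) ∧
    -- … which is submultiplicative …
    (∀ ξ η : H, MemLinfty τ Rmul ξ → MemLinfty τ Rmul η →
      ∀ Lxi : H →L[ℂ] H, (∀ a : A, Lxi (ι a) = Rmul a ξ) →
      MemLinfty τ Rmul (Lxi η) ∧
      infNorm τ Rmul (Lxi η) ≤ infNorm τ Rmul ξ * infNorm τ Rmul η) ∧
    -- … satisfies the C*-identity ‖ξ*ξ‖_∞ = ‖ξ‖_∞² …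
    (∀ ξ : H, MemLinfty τ Rmul ξ →
      ∀ Lsxi : H →L[ℂ] H, (∀ a : A, Lsxi (ι a) = Rmul a (J ξ)) →
      infNorm τ Rmul (Lsxi ξ) = (infNorm τ Rmul ξ) ^ 2) ∧
    -- … and is complete on L^∞(τ)
    (∀ f : ℕ → H, (∀ n, MemLinfty τ Rmul (f n)) →
      (∀ ε : ℝ, 0 < ε → ∃ N : ℕ, ∀ m n : ℕ, N ≤ m → N ≤ n →
        infNorm τ Rmul (f m - f n) < ε) →
      ∃ ξ : H, MemLinfty τ Rmul ξ ∧
        ∀ ε : ℝ, 0 < ε → ∃ N : ℕ, ∀ n : ℕ, N ≤ n → infNorm τ Rmul (f n - ξ) < ε) := by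
    classical
  -- J is an isometry, hence continuous
  have hJneg : ∀ x : H, J (-x) = - J x := by
    intro x
    have h := hJsmul (-1 : ℂ) x
    simpa using h
  have hJsub : ∀ x y : H, J (x - y) = J x - J y := by
    intro x y
    rw [sub_eq_add_neg, hJadd, hJneg, ← sub_eq_add_neg]
  have hJcont : Continuous J := by
    have : Isometry J := Isometry.of_dist_eq (fun x y => by
      rw [dist_eq_norm, dist_eq_norm, ← hJsub, hJiso])
    exact this.continuous
  -- density extension principles
  have extH : ∀ (f g : H → H), Continuous f → Continuous g →
      (∀ a : A, f (ι a) = g (ι a)) → ∀ x, f x = g x := by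
    intro f g hf hg h x
    exact congrFun (hdense.equalizer hf hg (funext h)) x
  have extC : ∀ (f g : H → ℂ), Continuous f → Continuous g →
      (∀ a : A, f (ι a) = g (ι a)) → ∀ x, f x = g x := by
    intro f g hf hg h x
    exact congrFun (hdense.equalizer hf hg (funext h)) x
  -- basic facts about the inner ℂ product
  have hself : ∀ u : H, (inner ℂ u u : ℂ).re = ‖u‖ ^ 2 := by
    intro u
    have h := inner_self_eq_norm_sq_to_K (𝕜 := ℂ) (x := u)
    rw [h]
    norm_cast
  have hnorm_sq : ∀ a : A, (τ (star a * a)).re = ‖ι a‖ ^ 2 := by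
    intro a
    rw [← hinner a a]
    exact hself _
  have hcontr : ∀ a : A, (τ (star a * a)).re ≤ 1 ↔ ‖ι a‖ ≤ 1 := by
    intro a
    rw [hnorm_sq]
    constructor
    · intro h; nlinarith [norm_nonneg (ι a)]
    · intro h; nlinarith [norm_nonneg (ι a)]
  -- algebraic properties of Rmul
  have hRsmul : ∀ (c : ℂ) (a : A) (x : H), Rmul (c • a) x = c • Rmul a x := by
    intro c a
    refine extH (fun x => Rmul (c • a) x) (fun x => c • Rmul a x)
      (Rmul _).continuous ((Rmul a).continuous.const_smul c) ?_
    intro b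
    beta_reduce
    rw [hRmul, hRmul, mul_smul_comm, map_smul]
  have hR1 : ∀ x : H, Rmul 1 x = x := by
    refine extH (fun x => Rmul 1 x) id (Rmul 1).continuous continuous_id ?_
    intro b
    beta_reduce
    rw [hRmul, mul_one]
    rfl
  have hRcomp : ∀ (b c : A) (x : H), Rmul b (Rmul c x) = Rmul (c * b) x := by
    intro b c
    refine extH (fun x => Rmul b (Rmul c x)) (fun x => Rmul (c * b) x)
      ((Rmul b).continuous.comp (Rmul c).continuous) (Rmul _).continuous ?_
    intro d
    beta_reduce
    rw [hRmul, hRmul, hRmul, mul_assoc]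
  have hRnull : ∀ a : A, ι a = 0 → ∀ x : H, Rmul a x = 0 := by
    intro a ha
    refine extH (fun x => Rmul a x) (fun _ => 0) (Rmul a).continuous continuous_const ?_
    intro b
    beta_reduce
    rw [hRmul]
    have h2 : (inner ℂ (ι (b * a)) (ι (b * a)) : ℂ) = 0 := by
      rw [hinner]
      have he : star (b * a) * (b * a) = star a * (star b * (b * a)) := by
        rw [star_mul, mul_assoc]
      rw [he, ← hinner, ha, inner_zero_left]
    exact inner_self_eq_zero.mp h2
  -- membership facts
  have hι1 : ‖ι (1 : A)‖ = 1 := by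
    have h := hnorm_sq 1
    rw [star_one, mul_one, hτone] at h
    have h1 : (1 : ℝ) = ‖ι (1 : A)‖ ^ 2 := by simpa using h
    nlinarith [norm_nonneg (ι (1 : A))]
  have hmemset : ∀ (ξ : H) (a : A), ‖ι a‖ ≤ 1 → ‖Rmul a ξ‖ ∈ infNormSet τ Rmul ξ :=
    fun ξ a ha => ⟨a, (hcontr a).mpr ha, rfl⟩
  have hnormMem : ∀ ξ : H, ‖ξ‖ ∈ infNormSet τ Rmul ξ := by
    intro ξ
    have h := hmemset ξ 1 (le_of_eq hι1)
    rwa [hR1] at h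
  have hne : ∀ ξ : H, (infNormSet τ Rmul ξ).Nonempty := fun ξ => ⟨‖ξ‖, hnormMem ξ⟩
  have hnorm_le : ∀ ξ : H, MemLinfty τ Rmul ξ → ‖ξ‖ ≤ infNorm τ Rmul ξ :=
    fun ξ hξ => le_csSup hξ (hnormMem ξ)
  have hinfNonneg : ∀ ξ : H, MemLinfty τ Rmul ξ → 0 ≤ infNorm τ Rmul ξ :=
    fun ξ hξ => le_trans (norm_nonneg ξ) (hnorm_le ξ hξ)
  have hmem_of_bound : ∀ (ξ : H) (C : ℝ), (∀ a : A, ‖Rmul a ξ‖ ≤ C * ‖ι a‖) →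
      MemLinfty τ Rmul ξ ∧ infNorm τ Rmul ξ ≤ C := by
    intro ξ C h
    have hC : 0 ≤ C := by
      have h1 := h 1
      rw [hR1, hι1, mul_one] at h1
      exact le_trans (norm_nonneg ξ) h1
    have hub : ∀ r ∈ infNormSet τ Rmul ξ, r ≤ C := by
      rintro r ⟨a, ha, rfl⟩
      calc ‖Rmul a ξ‖ ≤ C * ‖ι a‖ := h a
        _ ≤ C * 1 := mul_le_mul_of_nonneg_left ((hcontr a).mp ha) hC
        _ = C := mul_one C
    exact ⟨⟨C, hub⟩, csSup_le (hne ξ) hub⟩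
  have hbound : ∀ ξ : H, MemLinfty τ Rmul ξ → ∀ a : A,
      ‖Rmul a ξ‖ ≤ infNorm τ Rmul ξ * ‖ι a‖ := by
    intro ξ hξ a
    by_cases h0 : ι a = 0
    · rw [hRnull a h0 ξ, norm_zero, h0, norm_zero, mul_zero]
    · have hna : 0 < ‖ι a‖ := norm_pos_iff.mpr h0
      set c : ℂ := ((‖ι a‖⁻¹ : ℝ) : ℂ) with hc
      have hnc : ‖c‖ = ‖ι a‖⁻¹ := by
        rw [hc, Complex.norm_real, Real.norm_eq_abs, abs_of_nonneg (inv_nonneg.mpr hna.le)]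
      have hca : ‖ι (c • a)‖ = 1 := by
        rw [map_smul, norm_smul, hnc, inv_mul_cancel₀ hna.ne']
      have hle := le_csSup hξ (hmemset ξ (c • a) (le_of_eq hca))
      rw [hRsmul, norm_smul, hnc] at hle
      have h2 : ‖Rmul a ξ‖ = ‖ι a‖ * (‖ι a‖⁻¹ * ‖Rmul a ξ‖) := by
        field_simp
      rw [h2, mul_comm (infNorm τ Rmul ξ) ‖ι a‖]
      exact mul_le_mul_of_nonneg_left hle hna.le
  have hLbound : ∀ ξ : H, MemLinfty τ Rmul ξ → ∀ L : H →L[ℂ] H,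
      (∀ a : A, L (ι a) = Rmul a ξ) → ∀ x : H, ‖L x‖ ≤ infNorm τ Rmul ξ * ‖x‖ := by
    intro ξ hξ L hL x
    have hclosed : IsClosed {x : H | ‖L x‖ ≤ infNorm τ Rmul ξ * ‖x‖} :=
      isClosed_le (L.continuous.norm) (continuous_const.mul continuous_norm)
    have hsub : Set.range ι ⊆ {x : H | ‖L x‖ ≤ infNorm τ Rmul ξ * ‖x‖} := by
      rintro _ ⟨a, rfl⟩
      simp only [Set.mem_setOf_eq, hL]
      exact hbound ξ hξ a
    have huniv : (Set.univ : Set H) ⊆ {x : H | ‖L x‖ ≤ infNorm τ Rmul ξ * ‖x‖} := by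
      rw [← hdense.closure_range]
      exact hclosed.closure_subset_iff.mpr hsub
    exact huniv (Set.mem_univ x)
  have hcomm : ∀ (ζ : H) (L : H →L[ℂ] H), (∀ a : A, L (ι a) = Rmul a ζ) →
      ∀ (b : A) (x : H), L (Rmul b x) = Rmul b (L x) := by
    intro ζ L hL b
    refine extH (fun x => L (Rmul b x)) (fun x => Rmul b (L x))
      (L.continuous.comp (Rmul b).continuous) ((Rmul b).continuous.comp L.continuous) ?_
    intro c
    beta_reduce
    rw [hRmul, hL, hL, hRcomp]
  -- J and the inner ℂ product
  have hJinner : ∀ x y : H, (inner ℂ (J x) (J y) : ℂ) = inner ℂ y x := by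
    have step : ∀ (b : A) (x : H), (inner ℂ (J x) (J (ι b)) : ℂ) = inner ℂ (ι b) x := by
      intro b
      refine extC (fun x => inner ℂ (J x) (J (ι b))) (fun x => inner ℂ (ι b) x)
        (Continuous.inner hJcont continuous_const)
        (Continuous.inner continuous_const continuous_id) ?_
      intro a
      beta_reduce
      rw [hJstar, hJstar, hinner, hinner, star_star, hτtr]
    intro x y
    exact extC (fun y => inner ℂ (J x) (J y)) (fun y => inner ℂ y x)
      (Continuous.inner continuous_const hJcont)
      (Continuous.inner continuous_id continuous_const) (fun b => step b x) y
  have hJflip : ∀ u ξ : H, (inner ℂ u (J ξ) : ℂ) = inner ℂ ξ (J u) := by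
    intro u ξ
    calc (inner ℂ u (J ξ) : ℂ) = inner ℂ (J (J u)) (J ξ) := by rw [hJinv]
      _ = inner ℂ ξ (J u) := hJinner (J u) ξ
  have hRadj : ∀ (b : A) (x y : H), (inner ℂ (Rmul b x) y : ℂ) = inner ℂ x (Rmul (star b) y) := by
    have step : ∀ (b d : A) (x : H),
        (inner ℂ (Rmul b x) (ι d) : ℂ) = inner ℂ x (Rmul (star b) (ι d)) := by
      intro b d
      refine extC (fun x => inner ℂ (Rmul b x) (ι d)) (fun x => inner ℂ x (Rmul (star b) (ι d)))
        (Continuous.inner (Rmul b).continuous continuous_const)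
        (Continuous.inner continuous_id continuous_const) ?_
      intro c
      beta_reduce
      rw [hRmul, hRmul, hinner, hinner, star_mul, mul_assoc, hτtr, mul_assoc]
    intro b x y
    exact extC (fun y => inner ℂ (Rmul b x) y) (fun y => inner ℂ x (Rmul (star b) y))
      (Continuous.inner continuous_const continuous_id)
      (Continuous.inner continuous_const (Rmul _).continuous) (fun d => step b d x) y
  have hRadj2 : ∀ (b : A) (x y : H), (inner ℂ x (Rmul b y) : ℂ) = inner ℂ (Rmul (star b) x) y := by
    intro b x y
    have h := hRadj (star b) x y
    rw [star_star] at h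
    exact h.symm
  have hLinner : ∀ (ζ : H) (L : H →L[ℂ] H), (∀ a : A, L (ι a) = Rmul a ζ) →
      ∀ (c : A) (x : H), (inner ℂ (ι c) (L x) : ℂ) = inner ℂ (J (Rmul (star c) x)) ζ := by
    intro ζ L hL c
    refine extC (fun x => inner ℂ (ι c) (L x)) (fun x => inner ℂ (J (Rmul (star c) x)) ζ)
      (Continuous.inner continuous_const L.continuous)
      (Continuous.inner (hJcont.comp (Rmul _).continuous) continuous_const) ?_
    intro d
    beta_reduce
    rw [hL, hRadj2 d (ι c), hRmul, hRmul, hJstar, star_mul, star_star]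
  have hadj : ∀ (ξ : H) (Lxi Lsxi : H →L[ℂ] H),
      (∀ a : A, Lxi (ι a) = Rmul a ξ) → (∀ a : A, Lsxi (ι a) = Rmul a (J ξ)) →
      ∀ x y : H, (inner ℂ (Lxi x) y : ℂ) = inner ℂ x (Lsxi y) := by
    intro ξ Lxi Lsxi hLxi hLsxi x
    refine extC (fun y => inner ℂ (Lxi x) y) (fun y => inner ℂ x (Lsxi y))
      (Continuous.inner continuous_const continuous_id)
      (Continuous.inner continuous_const Lsxi.continuous) ?_
    intro b
    beta_reduce
    rw [hLsxi, hRadj2 b x, hJflip]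
    calc (inner ℂ (Lxi x) (ι b) : ℂ)
        = starRingEnd ℂ (inner ℂ (ι b) (Lxi x)) := (inner_conj_symm _ _).symm
      _ = starRingEnd ℂ (inner ℂ (J (Rmul (star b) x)) ξ) := by rw [hLinner ξ Lxi hLxi b x]
      _ = inner ℂ ξ (J (Rmul (star b) x)) := inner_conj_symm _ _
  have hinner_ext : ∀ u v : H, (∀ b : A, (inner ℂ u (ι b) : ℂ) = inner ℂ v (ι b)) → u = v := by
    intro u v h
    have h2 : ∀ x : H, (inner ℂ u x : ℂ) = inner ℂ v x :=
      extC (fun x => inner ℂ u x) (fun x => inner ℂ v x)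
        (Continuous.inner continuous_const continuous_id)
        (Continuous.inner continuous_const continuous_id) h
    have h3 : (inner ℂ (u - v) (u - v) : ℂ) = 0 := by
      rw [inner_sub_left, h2, sub_self]
    exact sub_eq_zero.mp (inner_self_eq_zero.mp h3)
  -- norm helpers
  have hadd_mem : ∀ ξ η : H, MemLinfty τ Rmul ξ → MemLinfty τ Rmul η →
      MemLinfty τ Rmul (ξ + η) ∧
      infNorm τ Rmul (ξ + η) ≤ infNorm τ Rmul ξ + infNorm τ Rmul η := by
    intro ξ η hξ hη
    refine hmem_of_bound _ _ ?_
    intro a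
    rw [map_add]
    calc ‖Rmul a ξ + Rmul a η‖ ≤ ‖Rmul a ξ‖ + ‖Rmul a η‖ := norm_add_le _ _
      _ ≤ infNorm τ Rmul ξ * ‖ι a‖ + infNorm τ Rmul η * ‖ι a‖ :=
          add_le_add (hbound ξ hξ a) (hbound η hη a)
      _ = (infNorm τ Rmul ξ + infNorm τ Rmul η) * ‖ι a‖ := (add_mul _ _ _).symm
  have hsmul_le : ∀ (c : ℂ) (ξ : H), MemLinfty τ Rmul ξ →
      MemLinfty τ Rmul (c • ξ) ∧ infNorm τ Rmul (c • ξ) ≤ ‖c‖ * infNorm τ Rmul ξ := by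
    intro c ξ hξ
    refine hmem_of_bound _ _ ?_
    intro a
    rw [map_smul, norm_smul]
    calc ‖c‖ * ‖Rmul a ξ‖ ≤ ‖c‖ * (infNorm τ Rmul ξ * ‖ι a‖) :=
        mul_le_mul_of_nonneg_left (hbound ξ hξ a) (norm_nonneg c)
      _ = ‖c‖ * infNorm τ Rmul ξ * ‖ι a‖ := (mul_assoc _ _ _).symm
  have hsmul_eq : ∀ (c : ℂ) (ξ : H), MemLinfty τ Rmul ξ →
      MemLinfty τ Rmul (c • ξ) ∧ infNorm τ Rmul (c • ξ) = ‖c‖ * infNorm τ Rmul ξ := by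
    intro c ξ hξ
    obtain ⟨hm, hle⟩ := hsmul_le c ξ hξ
    refine ⟨hm, le_antisymm hle ?_⟩
    by_cases hcz : c = 0
    · subst hcz
      simpa using hinfNonneg _ hm
    · have h2 := (hsmul_le c⁻¹ (c • ξ) hm).2
      rw [smul_smul, inv_mul_cancel₀ hcz, one_smul, norm_inv] at h2
      have hcpos : 0 < ‖c‖ := norm_pos_iff.mpr hcz
      calc ‖c‖ * infNorm τ Rmul ξ ≤ ‖c‖ * (‖c‖⁻¹ * infNorm τ Rmul (c • ξ)) :=
          mul_le_mul_of_nonneg_left h2 hcpos.le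
        _ = infNorm τ Rmul (c • ξ) := by
            rw [← mul_assoc, mul_inv_cancel₀ hcpos.ne', one_mul]
  -- now the main statement
  refine ⟨?_, ?_, ?_, ?_, ⟨?_, ?_, ?_⟩, ?_, ?_, ?_, ?_, ?_, ?_⟩
  · -- linear in the right variable
    intro ξ _ Lxi _ c d η ζ
    rw [map_add, map_smul, map_smul]
  · -- linear in the left variable
    intro ξ η hξ hη Lxi Leta Lcomb hLxi hLeta c d hLcomb ζ
    refine extH Lcomb (fun ζ => c • Lxi ζ + d • Leta ζ) Lcomb.continuous
      ((Lxi.continuous.const_smul c).add (Leta.continuous.const_smul d)) ?_ ζ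
    intro a
    beta_reduce
    rw [hLcomb, map_add, map_smul, map_smul, hLxi, hLeta]
  · -- associativity
    intro ξ η ζ hξ hη hζ Lxi Leta Lprod hLxi hLeta hLprod
    refine extH Lprod (fun x => Lxi (Leta x)) Lprod.continuous
      (Lxi.continuous.comp Leta.continuous) ?_ ζ
    intro a
    beta_reduce
    rw [hLprod, hLeta]
    exact (hcomm ξ Lxi hLxi a η).symm
  · -- star anti-homomorphism
    intro ξ η hξ hη Lxi Lseta hLxi hLseta
    apply hinner_ext
    intro b
    have hL : (inner ℂ (J (Lxi η)) (ι b) : ℂ) = inner ℂ (J (Rmul b η)) ξ := by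
      have h1 : (ι b : H) = J (ι (star b)) := by rw [hJstar, star_star]
      rw [h1, hJinner (Lxi η) (ι (star b)), hLinner ξ Lxi hLxi (star b) η, star_star]
    have hR : (inner ℂ (Lseta (J ξ)) (ι b) : ℂ) = inner ℂ (J (Rmul b η)) ξ := by
      calc (inner ℂ (Lseta (J ξ)) (ι b) : ℂ)
          = starRingEnd ℂ (inner ℂ (ι b) (Lseta (J ξ))) := (inner_conj_symm _ _).symm
        _ = starRingEnd ℂ (inner ℂ (J (Rmul (star b) (J ξ))) (J η)) := by
            rw [hLinner (J η) Lseta hLseta b (J ξ)]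
        _ = starRingEnd ℂ (inner ℂ η (Rmul (star b) (J ξ))) := by
            rw [hJinner (Rmul (star b) (J ξ)) η]
        _ = starRingEnd ℂ (inner ℂ (Rmul (star (star b)) η) (J ξ)) := by
            rw [hRadj2 (star b) η (J ξ)]
        _ = starRingEnd ℂ (inner ℂ (Rmul b η) (J ξ)) := by rw [star_star]
        _ = starRingEnd ℂ (inner ℂ ξ (J (Rmul b η))) := by rw [hJflip]
        _ = inner ℂ (J (Rmul b η)) ξ := inner_conj_symm _ _
    rw [hL, hR]
  · -- ι 1 ∈ L∞
    refine (hmem_of_bound (ι (1 : A)) 1 ?_).1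
    intro a
    rw [hRmul, one_mul, one_mul]
  · -- Lone is the identity
    intro Lone hLone ξ
    refine extH Lone id Lone.continuous continuous_id ?_ ξ
    intro a
    beta_reduce
    rw [hLone, hRmul, one_mul]
    rfl
  · -- ι 1 is a right unit
    intro ξ hξ Lxi hLxi
    rw [hLxi, hR1]
  · -- triangle inequality
    intro ξ η hξ hη
    exact hadd_mem ξ η hξ hη
  · -- homogeneity
    exact fun c ξ hξ => hsmul_eq c ξ hξ
  · -- nonnegativity and definiteness
    intro ξ hξ
    refine ⟨hinfNonneg ξ hξ, fun h => norm_le_zero_iff.mp ?_⟩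
    rw [← h]
    exact hnorm_le ξ hξ
  · -- submultiplicativity
    intro ξ η hξ hη Lxi hLxi
    refine hmem_of_bound _ _ ?_
    intro a
    rw [← hcomm ξ Lxi hLxi a η]
    calc ‖Lxi (Rmul a η)‖ ≤ infNorm τ Rmul ξ * ‖Rmul a η‖ := hLbound ξ hξ Lxi hLxi _
      _ ≤ infNorm τ Rmul ξ * (infNorm τ Rmul η * ‖ι a‖) :=
          mul_le_mul_of_nonneg_left (hbound η hη a) (hinfNonneg ξ hξ)
      _ = infNorm τ Rmul ξ * infNorm τ Rmul η * ‖ι a‖ := (mul_assoc _ _ _).symm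
  · -- C*-identity
    intro ξ hξ Lsxi hLsxi
    set Lxi := ContinuousLinearMap.adjoint Lsxi with hLxidef
    have hLxi : ∀ a : A, Lxi (ι a) = Rmul a ξ := by
      intro a
      apply hinner_ext
      intro b
      rw [hLxidef, ContinuousLinearMap.adjoint_inner_left, hLsxi, hRadj2 b (ι a) (J ξ),
        hJflip, hRmul, hJstar, star_mul, star_star, hRadj a ξ (ι b), hRmul]
    have hadj' := hadj ξ Lxi Lsxi hLxi hLsxi
    set N := infNorm τ Rmul ξ with hN
    have hNnn : 0 ≤ N := hinfNonneg ξ hξ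
    have hLs_bd : ∀ y : H, ‖Lsxi y‖ ≤ N * ‖y‖ := by
      intro y
      have h2 : (inner ℂ (Lxi (Lsxi y)) y : ℂ) = inner ℂ (Lsxi y) (Lsxi y) := hadj' (Lsxi y) y
      have h3 : ‖Lsxi y‖ ^ 2 ≤ ‖Lxi (Lsxi y)‖ * ‖y‖ := by
        calc ‖Lsxi y‖ ^ 2 = (inner ℂ (Lsxi y) (Lsxi y) : ℂ).re := (hself _).symm
          _ = (inner ℂ (Lxi (Lsxi y)) y : ℂ).re := by rw [h2]
          _ ≤ ‖(inner ℂ (Lxi (Lsxi y)) y : ℂ)‖ := Complex.re_le_norm _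
          _ = ‖(inner ℂ (Lxi (Lsxi y)) y : ℂ)‖ := rfl
          _ ≤ ‖Lxi (Lsxi y)‖ * ‖y‖ := norm_inner_le_norm _ _
      have h4 : ‖Lxi (Lsxi y)‖ ≤ N * ‖Lsxi y‖ := hLbound ξ hξ Lxi hLxi (Lsxi y)
      nlinarith [norm_nonneg (Lsxi y), norm_nonneg y, mul_nonneg hNnn (norm_nonneg y),
        mul_le_mul_of_nonneg_right h4 (norm_nonneg y)]
    have hMem2 : MemLinfty τ Rmul (Lsxi ξ) ∧ infNorm τ Rmul (Lsxi ξ) ≤ N * N := by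
      refine hmem_of_bound _ _ ?_
      intro a
      rw [← hcomm (J ξ) Lsxi hLsxi a ξ]
      calc ‖Lsxi (Rmul a ξ)‖ ≤ N * ‖Rmul a ξ‖ := hLs_bd _
        _ ≤ N * (N * ‖ι a‖) := mul_le_mul_of_nonneg_left (hbound ξ hξ a) hNnn
        _ = N * N * ‖ι a‖ := (mul_assoc _ _ _).symm
    have hSnn : 0 ≤ infNorm τ Rmul (Lsxi ξ) := hinfNonneg _ hMem2.1
    have hge : N ^ 2 ≤ infNorm τ Rmul (Lsxi ξ) := by
      have key : ∀ r ∈ infNormSet τ Rmul ξ, r ≤ Real.sqrt (infNorm τ Rmul (Lsxi ξ)) := by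
        rintro r ⟨a, ha, rfl⟩
        have ha' := (hcontr a).mp ha
        have h1 : ‖Rmul a ξ‖ ^ 2 = (inner ℂ (ι a) (Rmul a (Lsxi ξ)) : ℂ).re := by
          have e1 : Rmul a ξ = Lxi (ι a) := (hLxi a).symm
          have e2 : Lsxi (Lxi (ι a)) = Rmul a (Lsxi ξ) := by
            rw [hLxi a, hcomm (J ξ) Lsxi hLsxi a ξ]
          calc ‖Rmul a ξ‖ ^ 2 = (inner ℂ (Rmul a ξ) (Rmul a ξ) : ℂ).re := (hself _).symm
            _ = (inner ℂ (ι a) (Rmul a (Lsxi ξ)) : ℂ).re := by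
                rw [e1, hadj' (ι a) (Lxi (ι a)), e2]
        have h2 : ‖Rmul a ξ‖ ^ 2 ≤ infNorm τ Rmul (Lsxi ξ) := by
          rw [h1]
          calc (inner ℂ (ι a) (Rmul a (Lsxi ξ)) : ℂ).re
              ≤ ‖(inner ℂ (ι a) (Rmul a (Lsxi ξ)) : ℂ)‖ := Complex.re_le_norm _
            _ = ‖(inner ℂ (ι a) (Rmul a (Lsxi ξ)) : ℂ)‖ := rfl
            _ ≤ ‖ι a‖ * ‖Rmul a (Lsxi ξ)‖ := norm_inner_le_norm _ _
            _ ≤ 1 * ‖Rmul a (Lsxi ξ)‖ :=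
                mul_le_mul_of_nonneg_right ha' (norm_nonneg _)
            _ = ‖Rmul a (Lsxi ξ)‖ := one_mul _
            _ ≤ infNorm τ Rmul (Lsxi ξ) := le_csSup hMem2.1 ⟨a, ha, rfl⟩
        have h3 := Real.sqrt_le_sqrt h2
        rwa [Real.sqrt_sq (norm_nonneg _)] at h3
      have hN_le : N ≤ Real.sqrt (infNorm τ Rmul (Lsxi ξ)) := csSup_le (hne ξ) key
      calc N ^ 2 ≤ Real.sqrt (infNorm τ Rmul (Lsxi ξ)) ^ 2 := by
            exact pow_le_pow_left₀ hNnn hN_le 2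
        _ = infNorm τ Rmul (Lsxi ξ) := Real.sq_sqrt hSnn
    refine le_antisymm ?_ hge
    rw [sq]
    exact hMem2.2
  · -- completeness
    intro f hf hcau
    have hdiff : ∀ m n : ℕ, MemLinfty τ Rmul (f m - f n) := by
      intro m n
      have h1 := hsmul_le (-1 : ℂ) (f n) (hf n)
      have h2 := (hadd_mem (f m) ((-1 : ℂ) • f n) (hf m) h1.1).1
      have he : f m + (-1 : ℂ) • f n = f m - f n := by
        rw [neg_one_smul, ← sub_eq_add_neg]
      rwa [he] at h2
    have hCS : CauchySeq f := by
      rw [Metric.cauchySeq_iff]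
      intro ε hε
      obtain ⟨N, hN⟩ := hcau ε hε
      refine ⟨N, fun m hm n hn => lt_of_le_of_lt ?_ (hN m n hm hn)⟩
      rw [dist_eq_norm]
      exact hnorm_le _ (hdiff m n)
    obtain ⟨ξ, hlim⟩ := cauchySeq_tendsto_of_complete hCS
    have hkey : ∀ ε : ℝ, 0 < ε → ∃ N : ℕ, ∀ n : ℕ, N ≤ n →
        MemLinfty τ Rmul (ξ - f n) ∧ infNorm τ Rmul (ξ - f n) ≤ ε := by
      intro ε hε
      obtain ⟨N, hN⟩ := hcau ε hε
      refine ⟨N, fun n hn => hmem_of_bound _ ε ?_⟩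
      intro a
      have htend : Filter.Tendsto (fun m => ‖Rmul a (f m - f n)‖) Filter.atTop
          (nhds ‖Rmul a (ξ - f n)‖) := by
        have h1 : Filter.Tendsto (fun m => f m - f n) Filter.atTop (nhds (ξ - f n)) :=
          hlim.sub tendsto_const_nhds
        exact (((Rmul a).continuous.tendsto _).comp h1).norm
      refine le_of_tendsto htend ?_
      filter_upwards [Filter.eventually_ge_atTop N] with m hm
      calc ‖Rmul a (f m - f n)‖ ≤ infNorm τ Rmul (f m - f n) * ‖ι a‖ :=
          hbound _ (hdiff m n) a
        _ ≤ ε * ‖ι a‖ := mul_le_mul_of_nonneg_right (le_of_lt (hN m n hm hn)) (norm_nonneg _)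
    have hMemξ : MemLinfty τ Rmul ξ := by
      obtain ⟨N, hN⟩ := hkey 1 one_pos
      have h1 := (hN N le_rfl).1
      have h2 := (hadd_mem (ξ - f N) (f N) h1 (hf N)).1
      rwa [sub_add_cancel] at h2
    refine ⟨ξ, hMemξ, ?_⟩
    intro ε hε
    obtain ⟨N, hN⟩ := hkey (ε / 2) (half_pos hε)
    refine ⟨N, fun n hn => ?_⟩
    obtain ⟨hm1, hm2⟩ := hN n hn
    have h3 := hsmul_le (-1 : ℂ) (ξ - f n) hm1
    have he : (-1 : ℂ) • (ξ - f n) = f n - ξ := by rw [neg_one_smul, neg_sub]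
    rw [he] at h3
    calc infNorm τ Rmul (f n - ξ) ≤ ‖(-1 : ℂ)‖ * infNorm τ Rmul (ξ - f n) := h3.2
      _ = infNorm τ Rmul (ξ - f n) := by simp
      _ ≤ ε / 2 := hm2
      _ < ε := half_lt_self hε
end

section
/- The map ξ ↦ L_ξ is an injective unital *-homomorphism from L^∞(τ) into the bounded operators B(L²(τ)), i.e. L_{ξη} = L_ξ∘L_η and L_{ξ*} = (L_ξ)* for all ξ, η ∈ L^∞(τ), it is isometric: ‖L_ξ‖_{B(L²(τ))} = ‖ξ‖_∞, and for every a ∈ A and every ξ ∈ L²(τ) one has L_a(ξ) = a·ξ. -/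
open scoped InnerProductSpace

/-- The map `ξ ↦ L_ξ` (where `L_ξ` is the bounded operator determined by
`L_ξ(ι a) = ξ·a = Rmul a ξ` for `ξ ∈ L^∞(τ)`) is an injective unital *-homomorphism from
`L^∞(τ)` into `B(L²(τ))`: `L_{ξη} = L_ξ ∘ L_η` and `L_{ξ*} = (L_ξ)*`; it is isometric,
`‖L_ξ‖ = ‖ξ‖_∞`; and for every `a ∈ A` and `ξ ∈ L²(τ)` one has `L_a(ξ) = a·ξ = Lmul a ξ`. -/
theorem statement6
    {A H : Type*} [NormedRing A] [StarRing A] [CStarRing A] [NormedAlgebra ℂ A]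
    [StarModule ℂ A] [CompleteSpace A]
    [NormedAddCommGroup H] [InnerProductSpace ℂ H] [CompleteSpace H]
    (τ : A →ₗ[ℂ] ℂ)
    (hτpos : ∀ a : A, 0 ≤ (τ (star a * a)).re ∧ (τ (star a * a)).im = 0)
    (hτone : τ 1 = 1)
    (hτtr : ∀ a b : A, τ (a * b) = τ (b * a))
    (ι : A →ₗ[ℂ] H) (hdense : DenseRange ι)
    (hinner : ∀ a b : A, (inner ℂ (ι a) (ι b) : ℂ) = τ (star a * b))
    (Lmul Rmul : A → H →L[ℂ] H)
    (hLmul : ∀ a b : A, Lmul a (ι b) = ι (a * b))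
    (hRmul : ∀ a b : A, Rmul a (ι b) = ι (b * a))
    (J : H → H)
    (hJadd : ∀ ξ η : H, J (ξ + η) = J ξ + J η)
    (hJsmul : ∀ (c : ℂ) (ξ : H), J (c • ξ) = star c • J ξ)
    (hJiso : ∀ ξ : H, ‖J ξ‖ = ‖ξ‖)
    (hJinv : ∀ ξ : H, J (J ξ) = ξ)
    (hJstar : ∀ a : A, J (ι a) = ι (star a)) :
    -- multiplicativity: L_{ξη} = L_ξ ∘ L_η
    (∀ ξ η : H, MemLinfty τ Rmul ξ → MemLinfty τ Rmul η →
      ∀ Lxi Leta Lprod : H →L[ℂ] H,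
        (∀ a : A, Lxi (ι a) = Rmul a ξ) → (∀ a : A, Leta (ι a) = Rmul a η) →
        (∀ a : A, Lprod (ι a) = Rmul a (Lxi η)) →
        Lprod = Lxi.comp Leta) ∧
    -- *-preservation: L_{ξ*} = (L_ξ)*
    (∀ ξ : H, MemLinfty τ Rmul ξ →
      ∀ Lxi Lsxi : H →L[ℂ] H,
        (∀ a : A, Lxi (ι a) = Rmul a ξ) → (∀ a : A, Lsxi (ι a) = Rmul a (J ξ)) →
        Lsxi = ContinuousLinearMap.adjoint Lxi) ∧
    -- injectivity
    (∀ ξ η : H, MemLinfty τ Rmul ξ → MemLinfty τ Rmul η →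
      ∀ Lxi Leta : H →L[ℂ] H,
        (∀ a : A, Lxi (ι a) = Rmul a ξ) → (∀ a : A, Leta (ι a) = Rmul a η) →
        Lxi = Leta → ξ = η) ∧
    -- unitality: L_1 = id
    (∀ Lone : H →L[ℂ] H, (∀ a : A, Lone (ι a) = Rmul a (ι 1)) →
      Lone = ContinuousLinearMap.id ℂ H) ∧
    -- isometry: ‖L_ξ‖ = ‖ξ‖_∞
    (∀ ξ : H, MemLinfty τ Rmul ξ →
      ∀ Lxi : H →L[ℂ] H, (∀ a : A, Lxi (ι a) = Rmul a ξ) →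
        ‖Lxi‖ = infNorm τ Rmul ξ) ∧
    -- for a ∈ A, the operator L_{ι a} is the left multiplication: L_a(ξ) = a·ξ
    (∀ a : A, ∀ La : H →L[ℂ] H, (∀ b : A, La (ι b) = Rmul b (ι a)) →
      ∀ ξ : H, La ξ = Lmul a ξ) := by
  -- extensionality via density
  have hext : ∀ f g : H →L[ℂ] H, (∀ a : A, f (ι a) = g (ι a)) → f = g := by
    intro f g h
    ext x
    exact congrFun (hdense.equalizer f.continuous g.continuous (funext h)) x
  -- J is continuous
  have hJsub : ∀ ξ η : H, J (ξ - η) = J ξ - J η := by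
    intro ξ η
    have h1 : J ((-1 : ℂ) • η) = star (-1 : ℂ) • J η := hJsmul _ _
    simp only [neg_smul, one_smul, star_neg, star_one] at h1
    rw [sub_eq_add_neg, hJadd, sub_eq_add_neg, h1]
  have hJcont : Continuous J := by
    have : Isometry J := Isometry.of_dist_eq fun x y => by
      rw [dist_eq_norm, dist_eq_norm, ← hJsub, hJiso]
    exact this.continuous
  -- a vector orthogonal to the dense range is zero
  have hzero : ∀ v : H, (∀ b : A, (inner ℂ v (ι b) : ℂ) = 0) → v = 0 := by
    intro v hv
    have hc : (fun η : H => (inner ℂ v η : ℂ)) = fun _ => (0 : ℂ) :=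
      hdense.equalizer (continuous_const.inner continuous_id) continuous_const
        (funext fun b => hv b)
    have : (inner ℂ v v : ℂ) = 0 := congrFun hc v
    exact inner_self_eq_zero.mp this
  -- Rmul 1 = id
  have hRone : Rmul 1 = ContinuousLinearMap.id ℂ H := by
    apply hext; intro b
    simp [hRmul]
  -- Rmul multiplicative (reversed)
  have hRmulmul : ∀ a b : A, Rmul (b * a) = (Rmul a).comp (Rmul b) := by
    intro a b
    apply hext; intro c
    simp [hRmul, mul_assoc]
  -- norm via τ
  have hnormι : ∀ a : A, ‖ι a‖ ^ 2 = (τ (star a * a)).re := by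
    intro a
    rw [← @inner_self_eq_norm_sq ℂ, hinner]
    rfl
  -- Rmul 0 = 0
  have hR0 : Rmul 0 = 0 := by
    apply hext; intro b
    simp [hRmul]
  refine ⟨?_, ?_, ?_, ?_, ?_, ?_⟩
  · -- multiplicativity
    intro ξ η _ _ Lxi Leta Lprod hLxi hLeta hLprod
    have hcomm : ∀ a : A, (Rmul a).comp Lxi = Lxi.comp (Rmul a) := by
      intro a
      apply hext; intro b
      calc Rmul a (Lxi (ι b)) = Rmul a (Rmul b ξ) := by rw [hLxi]
        _ = Rmul (b * a) ξ := by rw [hRmulmul]; rfl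
        _ = Lxi (ι (b * a)) := (hLxi _).symm
        _ = Lxi (Rmul a (ι b)) := by rw [hRmul]
    apply hext; intro a
    have := congrFun (congrArg (fun f : H →L[ℂ] H => (f : H → H)) (hcomm a)) η
    simp only [ContinuousLinearMap.comp_apply] at this
    calc Lprod (ι a) = Rmul a (Lxi η) := hLprod a
      _ = Lxi (Rmul a η) := this
      _ = Lxi (Leta (ι a)) := by rw [hLeta]
      _ = (Lxi.comp Leta) (ι a) := rfl
  · -- star preservation
    intro ξ _ Lxi Lsxi hLxi hLsxi
    -- J is antiunitary
    have hJJ : ∀ u v : H, (inner ℂ (J u) (J v) : ℂ) = inner ℂ v u := by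
      have step1 : ∀ (a : A) (v : H), (inner ℂ (J (ι a)) (J v) : ℂ) = inner ℂ v (ι a) := by
        intro a
        have := hdense.equalizer (g := fun v : H => (inner ℂ (J (ι a)) (J v) : ℂ))
          (h := fun v : H => (inner ℂ v (ι a) : ℂ))
          ((continuous_const.inner hJcont))
          (continuous_id.inner continuous_const)
          (funext fun b => by
            simp only [Function.comp_apply, hJstar, hinner, star_star]
            rw [hτtr])
        exact fun v => congrFun this v
      intro u v
      have := hdense.equalizer (g := fun u : H => (inner ℂ (J u) (J v) : ℂ))
        (h := fun u : H => (inner ℂ v u : ℂ))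
        (hJcont.inner continuous_const)
        (continuous_const.inner continuous_id)
        (funext fun a => step1 a v)
      exact congrFun this u
    -- Rmul a ∘ J = J ∘ Lmul (star a)
    have hRJ : ∀ (a : A) (v : H), Rmul a (J v) = J (Lmul (star a) v) := by
      intro a
      have := hdense.equalizer (g := fun v : H => Rmul a (J v))
        (h := fun v : H => J (Lmul (star a) v))
        ((Rmul a).continuous.comp hJcont)
        (hJcont.comp (Lmul (star a)).continuous)
        (funext fun c => by
          simp only [Function.comp_apply, hJstar, hRmul, hLmul, hJstar, star_mul, star_star])
      exact fun v => congrFun this v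
    -- key identity
    have key : ∀ (a b : A) (v : H),
        (inner ℂ (ι (star b)) (Lmul (star a) v) : ℂ) = inner ℂ (ι a) (Rmul b v) := by
      intro a b
      have := hdense.equalizer (g := fun v : H => (inner ℂ (ι (star b)) (Lmul (star a) v) : ℂ))
        (h := fun v : H => (inner ℂ (ι a) (Rmul b v) : ℂ))
        (continuous_const.inner (Lmul (star a)).continuous)
        (continuous_const.inner (Rmul b).continuous)
        (funext fun c => by
          simp only [Function.comp_apply, hLmul, hRmul, hinner, star_star]
          simp only [← mul_assoc]
          rw [mul_assoc b (star a) c]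
          exact hτtr b (star a * c))
      exact fun v => congrFun this v
    apply hext; intro a
    have horth : ∀ b : A,
        (inner ℂ (Lsxi (ι a) - (ContinuousLinearMap.adjoint Lxi) (ι a)) (ι b) : ℂ) = 0 := by
      intro b
      rw [inner_sub_left, sub_eq_zero]
      have h1 : (inner ℂ (Lsxi (ι a)) (ι b) : ℂ) = inner ℂ (ι a) (Rmul b ξ) := by
        rw [hLsxi, hRJ]
        calc (inner ℂ (J (Lmul (star a) ξ)) (ι b) : ℂ)
            = inner ℂ (J (Lmul (star a) ξ)) (J (J (ι b))) := by rw [hJinv]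
          _ = inner ℂ (J (ι b)) (Lmul (star a) ξ) := hJJ _ _
          _ = inner ℂ (ι (star b)) (Lmul (star a) ξ) := by rw [hJstar]
          _ = inner ℂ (ι a) (Rmul b ξ) := key a b ξ
      have h2 : (inner ℂ ((ContinuousLinearMap.adjoint Lxi) (ι a)) (ι b) : ℂ)
          = inner ℂ (ι a) (Rmul b ξ) := by
        rw [ContinuousLinearMap.adjoint_inner_left, hLxi]
      rw [h1, h2]
    have := hzero _ horth
    exact sub_eq_zero.mp this
  · -- injectivity
    intro ξ η _ _ Lxi Leta hLxi hLeta heq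
    have h1 : Lxi (ι 1) = ξ := by
      rw [hLxi, hRone]; rfl
    have h2 : Leta (ι 1) = η := by
      rw [hLeta, hRone]; rfl
    rw [← h1, ← h2, heq]
  · -- unitality
    intro Lone hLone
    apply hext; intro a
    simp [hLone, hRmul]
  · -- isometry
    intro ξ hmem Lxi hLxi
    set S := infNormSet τ Rmul ξ with hS
    have h0S : (0 : ℝ) ∈ S := by
      refine ⟨0, ?_, ?_⟩
      · simp
      · rw [hR0]; simp
    have hM0 : 0 ≤ sSup S := le_csSup hmem h0S
    -- each generator bound
    have hbound : ∀ a : A, ‖Lxi (ι a)‖ ≤ sSup S * ‖ι a‖ := by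
      intro a
      rcases eq_or_lt_of_le (norm_nonneg (ι a)) with h0 | h0
      · have : ι a = 0 := by rw [← norm_eq_zero, ← h0]
        rw [this, map_zero, norm_zero]
        positivity
      · set t : ℝ := ‖ι a‖ with ht
        set a' : A := ((t : ℂ)⁻¹) • a with ha'
        have hιa' : ι a' = ((t : ℂ)⁻¹) • ι a := by rw [ha', map_smul]
        have hna' : ‖ι a'‖ = 1 := by
          rw [hιa', norm_smul]
          simp only [norm_inv, Complex.norm_real, Real.norm_eq_abs, abs_of_pos h0]
          field_simp
          exact ht.symm
        have hmemS : ‖Rmul a' ξ‖ ∈ S := by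
          refine ⟨a', ?_, rfl⟩
          rw [← hnormι, hna']; norm_num
        have hle : ‖Rmul a' ξ‖ ≤ sSup S := le_csSup hmem hmemS
        have heval : Rmul a' ξ = ((t : ℂ)⁻¹) • Lxi (ι a) := by
          rw [← hLxi, hιa', map_smul]
        rw [heval, norm_smul] at hle
        simp only [norm_inv, Complex.norm_real, Real.norm_eq_abs, abs_of_pos h0] at hle
        rw [inv_mul_le_iff₀ h0] at hle
        linarith [hle]
    have hle1 : ‖Lxi‖ ≤ sSup S := by
      apply ContinuousLinearMap.opNorm_le_bound _ hM0
      intro x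
      have hclosed : IsClosed {x : H | ‖Lxi x‖ ≤ sSup S * ‖x‖} :=
        isClosed_le (Lxi.continuous.norm) (continuous_const.mul continuous_norm)
      have hsub : Set.range ι ⊆ {x : H | ‖Lxi x‖ ≤ sSup S * ‖x‖} := by
        rintro _ ⟨a, rfl⟩; exact hbound a
      have := closure_minimal hsub hclosed
      exact this (hdense x)
    have hle2 : sSup S ≤ ‖Lxi‖ := by
      apply csSup_le ⟨0, h0S⟩
      rintro r ⟨a, ha, rfl⟩
      have hna : ‖ι a‖ ≤ 1 := by
        have h2 := hnormι a
        nlinarith [norm_nonneg (ι a)]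
      calc ‖Rmul a ξ‖ = ‖Lxi (ι a)‖ := by rw [hLxi]
        _ ≤ ‖Lxi‖ * ‖ι a‖ := Lxi.le_opNorm _
        _ ≤ ‖Lxi‖ * 1 := by
            exact mul_le_mul_of_nonneg_left hna (norm_nonneg _)
        _ = ‖Lxi‖ := mul_one _
    exact le_antisymm hle1 hle2
  · -- left multiplication
    intro a La hLa ξ
    have : La = Lmul a := by
      apply hext; intro b
      rw [hLa, hRmul, hLmul]
    rw [this]
end

section
/- As subsets of L²(τ), one has L^∞(τ_B) = L²(τ_B) ∩ L^∞(τ). In particular (the nontrivial inclusion), every ξ ∈ L²(τ_B) with sup{‖ξ·b‖_{L²(τ)} : b ∈ B, τ(b*b) ≤ 1} < ∞ also satisfies sup{‖ξ·a‖_{L²(τ)} : a ∈ A, τ(a*a) ≤ 1} < ∞. -/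
open scoped InnerProductSpace
open Filter

section AuxCopy

theorem dense_inner_ext {A H : Type*} [NormedRing A] [NormedAlgebra ℂ A]
    [NormedAddCommGroup H] [InnerProductSpace ℂ H]
    (ι : A →ₗ[ℂ] H) (hdense : DenseRange ι) {f g : H →L[ℂ] H}
    (h : ∀ b c : A, ⟪f (ι b), ι c⟫_ℂ = ⟪ι b, g (ι c)⟫_ℂ) :
    ∀ x y : H, ⟪f x, y⟫_ℂ = ⟪x, g y⟫_ℂ := by
  have h1 : ∀ (c : A) (x : H), ⟪f x, ι c⟫_ℂ = ⟪x, g (ι c)⟫_ℂ := by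
    intro c
    have heq := Continuous.ext_on hdense
      (f.continuous.inner continuous_const)
      (continuous_id.inner continuous_const)
      (fun x hx => by obtain ⟨b, rfl⟩ := hx; exact h b c)
    exact fun x => congrFun heq x
  intro x y
  have heq := Continuous.ext_on hdense
    ((continuous_const.inner continuous_id) : Continuous fun y : H => ⟪f x, y⟫_ℂ)
    (continuous_const.inner g.continuous)
    (fun y hy => by obtain ⟨c, rfl⟩ := hy; exact h1 c x)
  exact congrFun heq y

theorem dense_clm_ext {A H : Type*} [NormedRing A] [NormedAlgebra ℂ A]
    [NormedAddCommGroup H] [InnerProductSpace ℂ H]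
    (ι : A →ₗ[ℂ] H) (hdense : DenseRange ι) {f g : H →L[ℂ] H}
    (h : ∀ a : A, f (ι a) = g (ι a)) : f = g := by
  ext x
  have heq := Continuous.ext_on hdense f.continuous g.continuous
    (fun x hx => by obtain ⟨a, rfl⟩ := hx; exact h a)
  exact congrFun heq x

end AuxCopy

theorem keyBound
    {A H : Type*} [NormedRing A] [StarRing A] [CStarRing A] [NormedAlgebra ℂ A]
    [StarModule ℂ A] [CompleteSpace A]
    [NormedAddCommGroup H] [InnerProductSpace ℂ H] [CompleteSpace H]
    (τ : A →ₗ[ℂ] ℂ)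
    (hτtr : ∀ a b : A, τ (a * b) = τ (b * a))
    (ι : A →ₗ[ℂ] H) (hdense : DenseRange ι)
    (hinner : ∀ a b : A, (inner ℂ (ι a) (ι b) : ℂ) = τ (star a * b))
    (Lmul Rmul : A → H →L[ℂ] H)
    (hLmul : ∀ a b : A, Lmul a (ι b) = ι (a * b))
    (hRmul : ∀ a b : A, Rmul a (ι b) = ι (b * a))
    (B : StarSubalgebra ℂ A)
    (ξ : H)
    (hξK : ξ ∈ (Submodule.map ι (Subalgebra.toSubmodule B.toSubalgebra)).topologicalClosure)
    (M : ℝ) (hM : 1 ≤ M)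
    (hbd : ∀ b : A, b ∈ B → ‖Rmul b ξ‖ ≤ M * ‖ι b‖)
    (a : A) (ha : (τ (star a * a)).re ≤ 1) :
    ‖Rmul a ξ‖ ≤ M * M := by
  set SB := Submodule.map ι (Subalgebra.toSubmodule B.toSubalgebra) with hSB
  set K := SB.topologicalClosure with hKdef
  have hKclosed : IsClosed (K : Set H) := SB.isClosed_topologicalClosure
  have memK : ∀ b : A, b ∈ B → ι b ∈ K := fun b hb =>
    SB.le_topologicalClosure ⟨b, hb, rfl⟩
  have hKdense : ∀ v : H, v ∈ K → v ∈ closure (SB : Set H) := fun v hv => by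
    rw [← SB.topologicalClosure_coe]; exact hv
  -- inner product identities
  have innerR : ∀ (a : A) (x y : H), ⟪Rmul a x, y⟫_ℂ = ⟪x, Rmul (star a) y⟫_ℂ := by
    intro a
    apply dense_inner_ext ι hdense
    intro b c
    rw [hRmul, hRmul, hinner, hinner, star_mul, mul_assoc, hτtr, mul_assoc]
  have innerL : ∀ (a : A) (x y : H), ⟪Lmul a x, y⟫_ℂ = ⟪x, Lmul (star a) y⟫_ℂ := by
    intro a
    apply dense_inner_ext ι hdense
    intro b c
    rw [hLmul, hLmul, hinner, hinner, star_mul, mul_assoc]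
  -- operator identities
  have Rmul_mul : ∀ x y : A, Rmul (x * y) = (Rmul y).comp (Rmul x) := by
    intro x y
    apply dense_clm_ext ι hdense
    intro b
    simp [hRmul, mul_assoc]
  have Lmul_sub : ∀ x y : A, Lmul (x - y) = Lmul x - Lmul y := by
    intro x y
    apply dense_clm_ext ι hdense
    intro b
    simp [hLmul, sub_mul]
  -- norm facts
  have normIotaSq : ∀ x : A, ‖ι x‖ ^ 2 = (τ (star x * x)).re := by
    intro x
    rw [← inner_self_eq_norm_sq (𝕜 := ℂ), hinner]
    rfl
  have normIotaStar : ∀ x : A, ‖ι (star x)‖ = ‖ι x‖ := by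
    intro x
    have h1 : ‖ι (star x)‖ ^ 2 = ‖ι x‖ ^ 2 := by
      rw [normIotaSq, normIotaSq, star_star, hτtr]
    have h2 := norm_nonneg (ι (star x))
    have h3 := norm_nonneg (ι x)
    nlinarith
  -- K invariance
  have Kinv : ∀ (f : H →L[ℂ] H), (∀ b : A, b ∈ B → f (ι b) ∈ K) → ∀ v ∈ K, f v ∈ K := by
    intro f hf v hv
    have hsub : (SB : Set H) ⊆ f ⁻¹' (K : Set H) := by
      rintro _ ⟨b, hb, rfl⟩
      exact hf b hb
    exact closure_minimal hsub (hKclosed.preimage f.continuous) (hKdense v hv)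
  -- norm estimates on K via dense test vectors
  have normK : ∀ (v : H), v ∈ K → ∀ C : ℝ, 0 ≤ C →
      (∀ c : A, c ∈ B → ‖(⟪ι c, v⟫_ℂ)‖ ≤ C * ‖ι c‖) → ‖v‖ ≤ C := by
    intro v hv C hC h
    obtain ⟨u, hu, hlim⟩ := mem_closure_iff_seq_limit.mp (hKdense v hv)
    have hu' : ∀ n, ∃ b : A, b ∈ B ∧ ι b = u n := by
      intro n
      obtain ⟨b, hb, he⟩ := hu n
      exact ⟨b, hb, he⟩
    choose b hbB hbeq using hu'
    have hblim : Tendsto (fun n => ι (b n)) atTop (nhds v) := by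
      simp only [hbeq]; exact hlim
    have t1 : Tendsto (fun n => ‖(⟪ι (b n), v⟫_ℂ)‖) atTop (nhds ‖(⟪v, v⟫_ℂ)‖) :=
      (hblim.inner tendsto_const_nhds).norm
    have t2 : Tendsto (fun n => C * ‖ι (b n)‖) atTop (nhds (C * ‖v‖)) :=
      hblim.norm.const_mul C
    have hle : ‖(⟪v, v⟫_ℂ)‖ ≤ C * ‖v‖ :=
      le_of_tendsto_of_tendsto' t1 t2 (fun n => h (b n) (hbB n))
    have hvv : ‖(⟪v, v⟫_ℂ)‖ = ‖v‖ ^ 2 := by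
      rw [inner_self_eq_norm_sq_to_K]
      simp [norm_pow]
    rw [hvv] at hle
    nlinarith [norm_nonneg v]
  -- the key construction
  have step : ∀ (M' : ℝ) (ξ' : H), 1 ≤ M' → ξ' ∈ K →
      (∀ b : A, b ∈ B → ‖Rmul b ξ'‖ ≤ M' * ‖ι b‖) →
      ∃ ζ : H, ζ ∈ K ∧ (∀ b : A, b ∈ B → ‖Rmul b ζ‖ ≤ (M' * M') * ‖ι b‖) ∧
        ‖ζ‖ ≤ M' * ‖ξ'‖ ∧ (∀ c : A, ⟪ι c, ζ⟫_ℂ = ⟪ξ', Rmul (star c) ξ'⟫_ℂ) := by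
    intro M' ξ' hM' hξ'K hbd'
    have hM0 : (0:ℝ) < M' := lt_of_lt_of_le one_pos hM'
    have leftbd : ∀ b : A, b ∈ B → ‖Lmul (star b) ξ'‖ ≤ M' * ‖ι b‖ := by
      intro b hb
      have hvK : Lmul (star b) ξ' ∈ K :=
        Kinv (Lmul (star b)) (fun b' hb' => by
          rw [hLmul]; exact memK _ (mul_mem (star_mem hb) hb')) ξ' hξ'K
      refine normK _ hvK _ (by positivity) ?_
      intro c hc
      have e1 : ⟪ι c, Lmul (star b) ξ'⟫_ℂ = ⟪ι b, Rmul (star c) ξ'⟫_ℂ := by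
        rw [← innerL b (ι c) ξ', hLmul, ← hRmul c b, innerR]
      rw [e1]
      calc ‖⟪ι b, Rmul (star c) ξ'⟫_ℂ‖ ≤ ‖ι b‖ * ‖Rmul (star c) ξ'‖ :=
            norm_inner_le_norm _ _
        _ ≤ ‖ι b‖ * (M' * ‖ι (star c)‖) :=
            mul_le_mul_of_nonneg_left (hbd' (star c) (star_mem hc)) (norm_nonneg _)
        _ = (M' * ‖ι b‖) * ‖ι c‖ := by rw [normIotaStar]; ring
    obtain ⟨u, hu, hlim⟩ := mem_closure_iff_seq_limit.mp (hKdense ξ' hξ'K)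
    have hu' : ∀ n, ∃ b : A, b ∈ B ∧ ι b = u n := by
      intro n
      obtain ⟨b, hb, he⟩ := hu n
      exact ⟨b, hb, he⟩
    choose b hbB hbeq using hu'
    have hblim : Tendsto (fun n => ι (b n)) atTop (nhds ξ') := by
      simp only [hbeq]; exact hlim
    set ζseq : ℕ → H := fun n => Lmul (star (b n)) ξ' with hζseq
    have hdist : ∀ n m : ℕ, dist (ζseq n) (ζseq m) ≤ M' * dist (ι (b n)) (ι (b m)) := by
      intro n m
      rw [dist_eq_norm, dist_eq_norm]
      have e : ζseq n - ζseq m = Lmul (star (b n - b m)) ξ' := by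
        rw [star_sub, Lmul_sub, ContinuousLinearMap.sub_apply]
      rw [e, ← map_sub ι]
      exact leftbd _ (sub_mem (hbB n) (hbB m))
    have hcauchy : CauchySeq ζseq := by
      rw [Metric.cauchySeq_iff]
      intro ε hε
      obtain ⟨N, hN⟩ := Metric.cauchySeq_iff.mp hblim.cauchySeq (ε / M') (by positivity)
      refine ⟨N, fun m hm n hn => lt_of_le_of_lt (hdist m n) ?_⟩
      calc M' * dist (ι (b m)) (ι (b n)) < M' * (ε / M') :=
            (mul_lt_mul_iff_right₀ hM0).mpr (hN m hm n hn)
        _ = ε := by field_simp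
    obtain ⟨ζ, hζlim⟩ := cauchySeq_tendsto_of_complete hcauchy
    have hζK : ζ ∈ K := hKclosed.mem_of_tendsto hζlim (Eventually.of_forall fun n =>
      Kinv (Lmul (star (b n))) (fun b' hb' => by
        rw [hLmul]; exact memK _ (mul_mem (star_mem (hbB n)) hb')) ξ' hξ'K)
    have hprop : ∀ c : A, ⟪ι c, ζ⟫_ℂ = ⟪ξ', Rmul (star c) ξ'⟫_ℂ := by
      intro c
      have t1 : Tendsto (fun n => (⟪ι c, ζseq n⟫_ℂ)) atTop (nhds (⟪ι c, ζ⟫_ℂ)) :=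
        tendsto_const_nhds.inner hζlim
      have e : ∀ n, ⟪ι c, ζseq n⟫_ℂ = ⟪ι (b n), Rmul (star c) ξ'⟫_ℂ := by
        intro n
        show ⟪ι c, Lmul (star (b n)) ξ'⟫_ℂ = _
        rw [← innerL (b n) (ι c) ξ', hLmul, ← hRmul c (b n), innerR]
      simp only [e] at t1
      have t2 : Tendsto (fun n => ⟪ι (b n), Rmul (star c) ξ'⟫_ℂ) atTop
          (nhds (⟪ξ', Rmul (star c) ξ'⟫_ℂ)) :=
        hblim.inner tendsto_const_nhds
      exact tendsto_nhds_unique t1 t2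
    have hnormζ : ‖ζ‖ ≤ M' * ‖ξ'‖ := by
      refine le_of_tendsto_of_tendsto' hζlim.norm (hblim.norm.const_mul M') ?_
      intro n
      exact leftbd (b n) (hbB n)
    have hbdζ : ∀ b' : A, b' ∈ B → ‖Rmul b' ζ‖ ≤ (M' * M') * ‖ι b'‖ := by
      intro b' hb'
      have hRK : Rmul b' ζ ∈ K :=
        Kinv (Rmul b') (fun x hx => by
          rw [hRmul]; exact memK _ (mul_mem hx hb')) ζ hζK
      refine normK _ hRK _ (by positivity) ?_
      intro c hc
      have e1 : ⟪ι c, Rmul b' ζ⟫_ℂ = ⟪Rmul c ξ', Rmul b' ξ'⟫_ℂ := by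
        have h0 := innerR (star b') (ι c) ζ
        rw [star_star] at h0
        rw [← h0, hRmul, hprop, star_mul, star_star, Rmul_mul,
          ContinuousLinearMap.comp_apply, ← innerR]
      rw [e1]
      calc ‖⟪Rmul c ξ', Rmul b' ξ'⟫_ℂ‖ ≤ ‖Rmul c ξ'‖ * ‖Rmul b' ξ'‖ :=
            norm_inner_le_norm _ _
        _ ≤ (M' * ‖ι c‖) * (M' * ‖ι b'‖) :=
            mul_le_mul (hbd' c hc) (hbd' b' hb') (norm_nonneg _) (by positivity)
        _ = (M' * M' * ‖ι b'‖) * ‖ι c‖ := by ring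
    exact ⟨ζ, hζK, hbdζ, hnormζ, hprop⟩
  -- the core inequality
  have core : ∀ (ξ' ζ' : H), (∀ c : A, ⟪ι c, ζ'⟫_ℂ = ⟪ξ', Rmul (star c) ξ'⟫_ℂ) →
      ∀ (a' q : A), star q = q → q * q = a' * star a' →
      ‖Rmul a' ξ'‖ ^ 2 ≤ ‖ι q‖ * ‖Rmul q ζ'‖ := by
    intro ξ' ζ' hp a' q hq hqq
    have e1 : (⟪Rmul a' ξ', Rmul a' ξ'⟫_ℂ) = ⟪ι q, Rmul q ζ'⟫_ℂ := by
      have hsq : star (q * q) = a' * star a' := by rw [star_mul, hq, hqq]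
      rw [innerR a' ξ' (Rmul a' ξ'), ← ContinuousLinearMap.comp_apply,
        ← Rmul_mul a' (star a'), ← hsq, ← hp (q * q), ← hRmul q q,
        innerR q (ι q) ζ', hq]
    have e2 : ‖Rmul a' ξ'‖ ^ 2 = RCLike.re (⟪Rmul a' ξ', Rmul a' ξ'⟫_ℂ) :=
      (inner_self_eq_norm_sq _).symm
    rw [e2, e1]
    calc RCLike.re (⟪ι q, Rmul q ζ'⟫_ℂ) ≤ ‖⟪ι q, Rmul q ζ'⟫_ℂ‖ := RCLike.re_le_norm _
      _ ≤ ‖ι q‖ * ‖Rmul q ζ'‖ := norm_inner_le_norm _ _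
  -- the iteration
  have iter : ∀ (k : ℕ) (M' : ℝ) (ξ' : H), 1 ≤ M' → ξ' ∈ K →
      (∀ b' : A, b' ∈ B → ‖Rmul b' ξ'‖ ≤ M' * ‖ι b'‖) →
      ∀ q : A, star q = q → ‖ι q‖ ≤ 1 →
      ‖Rmul q ξ'‖ ^ (2 ^ k) ≤ ‖Rmul q‖ * M' ^ (2 ^ (k + 1) - 1) * ‖ξ'‖ := by
    intro k
    induction k with
    | zero =>
      intro M' ξ' hM' hK' hbd' q hq hq1
      have h1 := (Rmul q).le_opNorm ξ'
      have e : (2:ℕ) ^ (0 + 1) - 1 = 1 := by norm_num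
      rw [pow_zero, pow_one, e, pow_one]
      nlinarith [norm_nonneg (Rmul q), norm_nonneg ξ',
        mul_nonneg (norm_nonneg (Rmul q)) (norm_nonneg ξ')]
    | succ k ih =>
      intro M' ξ' hM' hK' hbd' q hq hq1
      obtain ⟨ζ, hζK, hbdζ, hnζ, hp⟩ := step M' ξ' hM' hK' hbd'
      have h1 : ‖Rmul q ξ'‖ ^ 2 ≤ ‖Rmul q ζ‖ := by
        have hc := core ξ' ζ hp q q hq (by rw [hq])
        nlinarith [norm_nonneg (Rmul q ζ), norm_nonneg (ι q)]
      have hMM' : (1:ℝ) ≤ M' * M' := by nlinarith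
      have ihz := ih (M' * M') ζ hMM' hζK hbdζ q hq hq1
      have he : 2 ^ (k + 1 + 1) - 1 = 2 * (2 ^ (k + 1) - 1) + 1 := by
        have h2 : 1 ≤ 2 ^ (k + 1) := Nat.one_le_two_pow
        have h3 : 2 ^ (k + 1 + 1) = 2 ^ (k + 1) * 2 := pow_succ 2 (k + 1)
        omega
      calc ‖Rmul q ξ'‖ ^ 2 ^ (k + 1) = (‖Rmul q ξ'‖ ^ 2) ^ 2 ^ k := by
            rw [← pow_mul, pow_succ, mul_comm (2 ^ k) 2]
        _ ≤ ‖Rmul q ζ‖ ^ 2 ^ k := pow_le_pow_left₀ (sq_nonneg _) h1 _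
        _ ≤ ‖Rmul q‖ * (M' * M') ^ (2 ^ (k + 1) - 1) * ‖ζ‖ := ihz
        _ ≤ ‖Rmul q‖ * (M' * M') ^ (2 ^ (k + 1) - 1) * (M' * ‖ξ'‖) :=
            mul_le_mul_of_nonneg_left hnζ (by positivity)
        _ = ‖Rmul q‖ * M' ^ (2 ^ (k + 1 + 1) - 1) * ‖ξ'‖ := by
            have hgen : ∀ e : ℕ, M' ^ (2 * e + 1) = (M' * M') ^ e * M' := by
              intro e
              rw [pow_succ, pow_mul, pow_two]
            rw [he, hgen]
            ring
  -- produce the square root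
  letI : CStarAlgebra A := {}
  letI := CStarAlgebra.spectralOrder A
  haveI := CStarAlgebra.spectralOrderedRing A
  obtain ⟨q, hq, hqq⟩ : ∃ q : A, star q = q ∧ q * q = a * star a := by
    have hpos : (0:A) ≤ a * star a := mul_star_self_nonneg a
    exact ⟨CFC.sqrt (a * star a), IsSelfAdjoint.of_nonneg (CFC.sqrt_nonneg _),
      CFC.sqrt_mul_sqrt_self _ hpos⟩
  have hq1 : ‖ι q‖ ≤ 1 := by
    have h2 : ‖ι q‖ ^ 2 = (τ (star a * a)).re := by
      rw [normIotaSq, hq, hqq, hτtr]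
    nlinarith [norm_nonneg (ι q)]
  obtain ⟨ζ, hζK, hbdζ, hnζ, hp⟩ := step M ξ hM hξK hbd
  have hcore : ‖Rmul a ξ‖ ^ 2 ≤ ‖Rmul q ζ‖ := by
    have hc := core ξ ζ hp a q hq hqq
    nlinarith [norm_nonneg (Rmul q ζ), norm_nonneg (ι q)]
  have hMM : (1:ℝ) ≤ M * M := by nlinarith
  by_contra hcon
  push_neg at hcon
  set x := ‖Rmul a ξ‖ with hx
  have hMM0 : (0:ℝ) < M * M := by nlinarith
  have huniform : ∀ k : ℕ, (x / (M * M)) ^ (2 ^ (k + 1)) ≤ ‖Rmul q‖ * ‖ζ‖ := by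
    intro k
    have hiter := iter k (M * M) ζ hMM hζK hbdζ q hq hq1
    have h4 : x ^ (2 ^ (k + 1)) ≤ ‖Rmul q‖ * (M * M) ^ (2 ^ (k + 1)) * ‖ζ‖ := by
      have h5 : x ^ (2 ^ (k + 1)) = (x ^ 2) ^ 2 ^ k := by
        rw [← pow_mul, pow_succ, mul_comm (2 ^ k) 2]
      have h6 : (x ^ 2) ^ 2 ^ k ≤ ‖Rmul q ζ‖ ^ 2 ^ k :=
        pow_le_pow_left₀ (sq_nonneg _) hcore _
      have h7 : (M * M) ^ (2 ^ (k + 1) - 1) ≤ (M * M) ^ (2 ^ (k + 1)) :=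
        pow_le_pow_right₀ hMM (Nat.sub_le _ _)
      have h8 : ‖Rmul q‖ * (M * M) ^ (2 ^ (k + 1) - 1) * ‖ζ‖ ≤
          ‖Rmul q‖ * (M * M) ^ (2 ^ (k + 1)) * ‖ζ‖ :=
        mul_le_mul_of_nonneg_right
          (mul_le_mul_of_nonneg_left h7 (norm_nonneg (Rmul q))) (norm_nonneg ζ)
      rw [h5]
      exact le_trans h6 (le_trans hiter h8)
    rw [div_pow, div_le_iff₀ (pow_pos hMM0 _)]
    calc x ^ 2 ^ (k + 1) ≤ ‖Rmul q‖ * (M * M) ^ (2 ^ (k + 1)) * ‖ζ‖ := h4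
      _ = ‖Rmul q‖ * ‖ζ‖ * (M * M) ^ 2 ^ (k + 1) := by ring
  have hx1 : 1 < x / (M * M) := by
    rw [lt_div_iff₀ hMM0]
    linarith
  obtain ⟨n, hn⟩ := pow_unbounded_of_one_lt (‖Rmul q‖ * ‖ζ‖) hx1
  have hnle : n ≤ 2 ^ (n + 1) := by
    have h1 := Nat.lt_two_pow_self (n := n)
    have h2 : (2:ℕ) ^ n ≤ 2 ^ (n + 1) := Nat.pow_le_pow_right (by norm_num) (Nat.le_succ n)
    omega
  have hmono : (x / (M * M)) ^ n ≤ (x / (M * M)) ^ (2 ^ (n + 1)) :=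
    pow_le_pow_right₀ hx1.le hnle
  linarith [huniform n]


/-- The set of numbers `‖ξ·b‖` over `L²`-contractions `b ∈ B`, for a unital *-subalgebra
`B ⊆ A`; its supremum is the `L^∞(τ_B)`-norm of `ξ`. -/
def infNormSetB {A H : Type*} [NormedRing A] [StarRing A] [NormedAlgebra ℂ A] [StarModule ℂ A]
    [NormedAddCommGroup H] [InnerProductSpace ℂ H]
    (τ : A →ₗ[ℂ] ℂ) (Rmul : A → H →L[ℂ] H) (B : StarSubalgebra ℂ A) (ξ : H) : Set ℝ :=
  {r : ℝ | ∃ b : A, b ∈ B ∧ (τ (star b * b)).re ≤ 1 ∧ r = ‖Rmul b ξ‖}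

/-- Boundedness part of `ξ ∈ L^∞(τ_B)`. -/
def MemLinftyB {A H : Type*} [NormedRing A] [StarRing A] [NormedAlgebra ℂ A] [StarModule ℂ A]
    [NormedAddCommGroup H] [InnerProductSpace ℂ H]
    (τ : A →ₗ[ℂ] ℂ) (Rmul : A → H →L[ℂ] H) (B : StarSubalgebra ℂ A) (ξ : H) : Prop :=
  BddAbove (infNormSetB τ Rmul B ξ)

/-- As subsets of `L²(τ)`, one has `L^∞(τ_B) = L²(τ_B) ∩ L^∞(τ)`: an element
`ξ` of `L²(τ_B)` (the closure `K` of the image of the unital *-subalgebra `B ⊆ A`) whose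
multiplications `ξ·b` are bounded over `L²`-contractions `b ∈ B` is automatically bounded over
`L²`-contractions `a ∈ A`. -/
theorem statement14
    {A H : Type*} [NormedRing A] [StarRing A] [CStarRing A] [NormedAlgebra ℂ A]
    [StarModule ℂ A] [CompleteSpace A]
    [NormedAddCommGroup H] [InnerProductSpace ℂ H] [CompleteSpace H]
    (τ : A →ₗ[ℂ] ℂ)
    (hτpos : ∀ a : A, 0 ≤ (τ (star a * a)).re ∧ (τ (star a * a)).im = 0)
    (hτone : τ 1 = 1)
    (hτtr : ∀ a b : A, τ (a * b) = τ (b * a))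
    (ι : A →ₗ[ℂ] H) (hdense : DenseRange ι)
    (hinner : ∀ a b : A, (inner ℂ (ι a) (ι b) : ℂ) = τ (star a * b))
    (Lmul Rmul : A → H →L[ℂ] H)
    (hLmul : ∀ a b : A, Lmul a (ι b) = ι (a * b))
    (hRmul : ∀ a b : A, Rmul a (ι b) = ι (b * a))
    (B : StarSubalgebra ℂ A)
    (K : Submodule ℂ H)
    (hK : K = (Submodule.map ι (Subalgebra.toSubmodule B.toSubalgebra)).topologicalClosure) :
    {ξ : H | ξ ∈ K ∧ MemLinftyB τ Rmul B ξ} = {ξ : H | ξ ∈ K ∧ MemLinfty τ Rmul ξ} := by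
  simp only [MemLinftyB, MemLinfty, infNormSetB, infNormSet]
  subst hK
  ext ξ
  simp only [Set.mem_setOf_eq]
  constructor
  · rintro ⟨hξK, hbdd⟩
    refine ⟨hξK, ?_⟩
    obtain ⟨M₀, hM₀⟩ := hbdd
    have hM₀mem : ∀ b : A, b ∈ B → (τ (star b * b)).re ≤ 1 → ‖Rmul b ξ‖ ≤ M₀ := by
      intro b hb h1
      exact hM₀ ⟨b, hb, h1, rfl⟩
    have hM₀nn : (0:ℝ) ≤ M₀ := by
      refine le_trans (norm_nonneg (Rmul 1 ξ)) (hM₀mem 1 (one_mem B) ?_)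
      simp [hτone]
    set M : ℝ := max M₀ 1 with hMdef
    have hM : 1 ≤ M := le_max_right _ _
    have hM0 : (0:ℝ) < M := lt_of_lt_of_le one_pos hM
    have normIotaSq : ∀ x : A, ‖ι x‖ ^ 2 = (τ (star x * x)).re := by
      intro x
      rw [← inner_self_eq_norm_sq (𝕜 := ℂ), hinner]
      rfl
    have Rmul_smul : ∀ (s : ℝ) (x : A), Rmul ((s:ℂ) • x) = (s:ℂ) • Rmul x := by
      intro s x
      apply dense_clm_ext ι hdense
      intro b
      simp [hRmul, mul_smul_comm]
    have hτsmul : ∀ (s : ℝ) (x : A),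
        (τ (star ((s:ℂ) • x) * ((s:ℂ) • x))).re = s ^ 2 * (τ (star x * x)).re := by
      intro s x
      rw [star_smul, smul_mul_smul_comm, map_smul]
      rw [show (star ((s:ℂ)) * (s:ℂ)) = ((s * s : ℝ) : ℂ) by
        simp [Complex.conj_ofReal]]
      rw [smul_eq_mul, Complex.re_ofReal_mul]
      ring
    have hbd : ∀ b : A, b ∈ B → ‖Rmul b ξ‖ ≤ M * ‖ι b‖ := by
      intro b hb
      rcases eq_or_lt_of_le (norm_nonneg (ι b)) with h0 | h0
      · have hre : (τ (star b * b)).re = 0 := by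
          rw [← normIotaSq, ← h0]
          ring
        have hz : ‖Rmul b ξ‖ ≤ 0 := by
          by_contra hpos
          push_neg at hpos
          set s : ℝ := (M₀ + 1) / ‖Rmul b ξ‖ with hs
          have hspos : 0 < s := by positivity
          have hsmem : ((s:ℂ) • b) ∈ B := B.smul_mem hb _
          have hcon1 : (τ (star ((s:ℂ) • b) * ((s:ℂ) • b))).re ≤ 1 := by
            rw [hτsmul, hre]
            norm_num
          have hle := hM₀mem _ hsmem hcon1
          rw [Rmul_smul, ContinuousLinearMap.smul_apply, norm_smul] at hle
          rw [Complex.norm_real, Real.norm_eq_abs, abs_of_pos hspos, hs,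
            div_mul_cancel₀ _ (ne_of_gt hpos)] at hle
          linarith
        calc ‖Rmul b ξ‖ ≤ 0 := hz
          _ ≤ M * ‖ι b‖ := by positivity
      · set s : ℝ := 1 / ‖ι b‖ with hs
        have hspos : 0 < s := by positivity
        have hsmem : ((s:ℂ) • b) ∈ B := B.smul_mem hb _
        have hcon1 : (τ (star ((s:ℂ) • b) * ((s:ℂ) • b))).re ≤ 1 := by
          rw [hτsmul, ← normIotaSq, hs]
          rw [div_pow, one_pow, one_div_mul_cancel (by positivity)]
        have hle := hM₀mem _ hsmem hcon1
        rw [Rmul_smul, ContinuousLinearMap.smul_apply, norm_smul] at hle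
        rw [Complex.norm_real, Real.norm_eq_abs, abs_of_pos hspos, hs] at hle
        rw [div_mul_eq_mul_div, div_le_iff₀ h0, one_mul] at hle
        calc ‖Rmul b ξ‖ ≤ M₀ * ‖ι b‖ := hle
          _ ≤ M * ‖ι b‖ := by
            have := le_max_left M₀ 1
            nlinarith [norm_nonneg (ι b)]
    refine ⟨M * M, ?_⟩
    rintro r ⟨a, ha, rfl⟩
    exact keyBound τ hτtr ι hdense hinner Lmul Rmul hLmul hRmul B ξ hξK M hM hbd a ha
  · rintro ⟨hξK, hbdd⟩
    obtain ⟨M₀, hM₀⟩ := hbdd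
    exact ⟨hξK, M₀, by rintro r ⟨b, hbB, hb1, rfl⟩; exact hM₀ ⟨b, hb1, rfl⟩⟩
end

section
/- For every t > 0 and every z ∈ ℂ with Im z > 0, the Cauchy–Stieltjes transform of the semicircular distribution μ_t equals G(t, z); that is, ∫_ℝ (z − x)⁻¹ dμ_t(x) = (z − √(z² − 4t))/(2t). -/
open MeasureTheory

/-- The semicircular distribution of variance `t` (radius `2√t`): the measure on `ℝ` with
density `x ↦ (2πt)⁻¹ √(max (4t − x²) 0)` with respect to Lebesgue measure. -/
noncomputable def semicircle (t : ℝ) : Measure ℝ :=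
  volume.withDensity
    (fun x => ENNReal.ofReal ((2 * Real.pi * t)⁻¹ * Real.sqrt (max (4 * t - x ^ 2) 0)))

/-- The branch `√(z² − 4t) := z·(1 − 4t/z²)^{1/2}` (principal branch of the complex square
root), suited to `Im z > 0`. -/
noncomputable def sqrtShifted (t : ℝ) (z : ℂ) : ℂ :=
  z * (1 - 4 * (t : ℂ) / z ^ 2) ^ ((1 : ℂ) / 2)

/-- `G(t, z) := (z − √(z² − 4t))/(2t)`. -/
noncomputable def G (t : ℝ) (z : ℂ) : ℂ :=
  (z - sqrtShifted t z) / (2 * (t : ℂ))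

section Aux
open Complex

lemma ne_and_re_pos {q w : ℂ} (hq : ‖q‖ < 1) (hw : ‖w‖ = 1) :
    0 < (1 - q * w).re := by
  have h1 : (q * w).re ≤ ‖q * w‖ := Complex.re_le_norm _
  have h2 : ‖q * w‖ = ‖q‖ := by rw [norm_mul, hw, mul_one]
  have : (1 - q * w).re = 1 - (q * w).re := by simp
  rw [this]; linarith

lemma keyIntegral (q : ℂ) (hq : ‖q‖ < 1) (hq0 : q ≠ 0) :
    ∫ θ in (0:ℝ)..Real.pi,
      ((Real.sin θ : ℂ))^2 / (1 - 2*q*(Real.cos θ : ℂ) + q^2) = (Real.pi : ℂ)/2 := by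
  have habs1 : ∀ θ : ℝ, ‖Complex.exp ((θ:ℂ) * I)‖ = 1 := by
    intro θ; rw [Complex.norm_exp]; simp
  have habs2 : ∀ θ : ℝ, ‖Complex.exp (-((θ:ℂ) * I))‖ = 1 := by
    intro θ; rw [Complex.norm_exp]; simp
  have hre1 : ∀ θ : ℝ, 0 < (1 - q * Complex.exp ((θ:ℂ) * I)).re :=
    fun θ => ne_and_re_pos hq (habs1 θ)
  have hre2 : ∀ θ : ℝ, 0 < (1 - q * Complex.exp (-((θ:ℂ) * I))).re :=
    fun θ => ne_and_re_pos hq (habs2 θ)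
  have hne1 : ∀ θ : ℝ, 1 - q * Complex.exp ((θ:ℂ) * I) ≠ 0 := by
    intro θ h
    have := hre1 θ; rw [h] at this; simp at this
  have hne2 : ∀ θ : ℝ, 1 - q * Complex.exp (-((θ:ℂ) * I)) ≠ 0 := by
    intro θ h
    have := hre2 θ; rw [h] at this; simp at this
  -- the factorization of the denominator
  have hfactor : ∀ θ : ℝ, 1 - 2*q*(Real.cos θ : ℂ) + q^2
      = (1 - q * Complex.exp ((θ:ℂ) * I)) * (1 - q * Complex.exp (-((θ:ℂ) * I))) := by
    intro θ
    have hcos : (Real.cos θ : ℂ) = (Complex.exp ((θ:ℂ)*I) + Complex.exp (-((θ:ℂ)*I)))/2 := by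
      rw [Complex.ofReal_cos, Complex.cos]
      ring_nf
    have hprod : Complex.exp ((θ:ℂ)*I) * Complex.exp (-((θ:ℂ)*I)) = 1 := by
      rw [← Complex.exp_add]; simp
    rw [hcos]
    linear_combination (-q^2) * hprod
  have hDne : ∀ θ : ℝ, 1 - 2*q*(Real.cos θ : ℂ) + q^2 ≠ 0 := by
    intro θ; rw [hfactor θ]; exact mul_ne_zero (hne1 θ) (hne2 θ)
  set F : ℝ → ℂ := fun θ =>
    (Real.sin θ : ℂ)/(2*q) + ((1+q^2)/(4*q^2))*(θ:ℂ)
      - ((1-q^2)/(4*q^2)) * ((θ:ℂ) + I * Complex.log (1 - q*Complex.exp ((θ:ℂ)*I))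
          - I * Complex.log (1 - q*Complex.exp (-((θ:ℂ)*I)))) with hF_def
  have hθ' : ∀ θ : ℝ, HasDerivAt (fun s : ℝ => ((s:ℝ):ℂ)) 1 θ := by
    intro θ
    simpa using (hasDerivAt_id θ).ofReal_comp
  have hderiv : ∀ θ : ℝ, HasDerivAt F
      (((Real.sin θ : ℂ))^2 / (1 - 2*q*(Real.cos θ : ℂ) + q^2)) θ := by
    intro θ
    have hsin : HasDerivAt (fun s : ℝ => ((Real.sin s : ℝ):ℂ)) (Real.cos θ) θ :=
      (Real.hasDerivAt_sin θ).ofReal_comp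
    have hE1 : HasDerivAt (fun s : ℝ => Complex.exp ((s:ℂ)*I))
        (Complex.exp ((θ:ℂ)*I) * I) θ := by
      simpa using ((hθ' θ).mul_const I).cexp
    have hE2 : HasDerivAt (fun s : ℝ => Complex.exp (-((s:ℂ)*I)))
        (Complex.exp (-((θ:ℂ)*I)) * (-I)) θ := by
      simpa using ((hθ' θ).mul_const I).neg.cexp
    have hinner1 : HasDerivAt (fun s : ℝ => 1 - q * Complex.exp ((s:ℂ)*I))
        (-(q * (Complex.exp ((θ:ℂ)*I) * I))) θ := (hE1.const_mul q).const_sub 1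
    have hinner2 : HasDerivAt (fun s : ℝ => 1 - q * Complex.exp (-((s:ℂ)*I)))
        (-(q * (Complex.exp (-((θ:ℂ)*I)) * (-I)))) θ := (hE2.const_mul q).const_sub 1
    have hslit1 : (1 - q * Complex.exp ((θ:ℂ)*I)) ∈ Complex.slitPlane :=
      Or.inl (hre1 θ)
    have hslit2 : (1 - q * Complex.exp (-((θ:ℂ)*I))) ∈ Complex.slitPlane :=
      Or.inl (hre2 θ)
    have hL1 := hinner1.clog_real hslit1
    have hL2 := hinner2.clog_real hslit2
    have hC : HasDerivAt (fun s : ℝ => (s:ℂ) + I * Complex.log (1 - q*Complex.exp ((s:ℂ)*I))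
          - I * Complex.log (1 - q*Complex.exp (-((s:ℂ)*I))))
        (1 + I * (-(q * (Complex.exp ((θ:ℂ)*I) * I)) / (1 - q * Complex.exp ((θ:ℂ)*I)))
          - I * (-(q * (Complex.exp (-((θ:ℂ)*I)) * (-I))) / (1 - q * Complex.exp (-((θ:ℂ)*I))))) θ :=
      ((hθ' θ).add (hL1.const_mul I)).sub (hL2.const_mul I)
    have hFd : HasDerivAt F
        ((Real.cos θ : ℂ)/(2*q) + ((1+q^2)/(4*q^2))*1
          - ((1-q^2)/(4*q^2)) * (1 + I * (-(q * (Complex.exp ((θ:ℂ)*I) * I)) / (1 - q * Complex.exp ((θ:ℂ)*I)))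
          - I * (-(q * (Complex.exp (-((θ:ℂ)*I)) * (-I))) / (1 - q * Complex.exp (-((θ:ℂ)*I)))))) θ :=
      ((hsin.div_const (2*q)).add ((hθ' θ).const_mul ((1+q^2)/(4*q^2)))).sub
        (hC.const_mul ((1-q^2)/(4*q^2)))
    convert hFd using 1
    -- now an algebraic identity
    set e := Complex.exp ((θ:ℂ)*I) with he_def
    have he0 : e ≠ 0 := Complex.exp_ne_zero _
    have heneg : Complex.exp (-((θ:ℂ)*I)) = e⁻¹ := by rw [Complex.exp_neg]
    have hi1 : I * (-(q * (e * I)) / (1 - q * e)) = q * e / (1 - q * e) := by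
      rw [← mul_div_assoc]
      congr 1
      linear_combination (-(q*e)) * Complex.I_mul_I
    have hi2 : I * (-(q * (e⁻¹ * (-I))) / (1 - q * e⁻¹)) = -(q * e⁻¹) / (1 - q * e⁻¹) := by
      rw [← mul_div_assoc]
      congr 1
      linear_combination (q*e⁻¹) * Complex.I_mul_I
    have hsin2 : ((Real.sin θ : ℂ))^2 = 1 - ((Real.cos θ : ℂ))^2 := by
      norm_cast
      nlinarith [Real.sin_sq_add_cos_sq θ]
    have hcos : (Real.cos θ : ℂ) = (e + e⁻¹)/2 := by
      rw [Complex.ofReal_cos, Complex.cos, show -(θ:ℂ)*I = -((θ:ℂ)*I) by ring, heneg]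
    have hne2' : 1 - q * e⁻¹ ≠ 0 := by rw [← heneg]; exact hne2 θ
    have hem : e - q ≠ 0 := by
      have h' : e - q = e * (1 - q * e⁻¹) := by field_simp
      rw [h']; exact mul_ne_zero he0 hne2'
    rw [hsin2, hfactor θ, heneg, hcos, hi1, hi2]
    obtain ⟨u, hu⟩ : ∃ u, u = 1 - q*e := ⟨_, rfl⟩
    obtain ⟨v, hv⟩ : ∃ v, v = 1 - q*e⁻¹ := ⟨_, rfl⟩
    rw [← hu, ← hv]
    have huN : u ≠ 0 := by rw [hu]; exact hne1 θ
    have hvN : v ≠ 0 := by rw [hv]; exact hne2'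
    field_simp [huN, hvN, he0]
    have hD : (e * 2 * (2 * q) * (4 * q ^ 2) * (4 * q ^ 2 * (u * (e * v)))) ≠ 0 := by
      simp [mul_eq_zero, he0, hq0, huN, hvN]
    rw [hu, hv]
    field_simp [he0]
    ring
  have hcont : Continuous fun θ : ℝ =>
      ((Real.sin θ : ℂ))^2 / (1 - 2*q*(Real.cos θ : ℂ) + q^2) := by
    apply Continuous.div
    · exact (Complex.continuous_ofReal.comp Real.continuous_sin).pow 2
    · exact (continuous_const.sub (continuous_const.mul
        (Complex.continuous_ofReal.comp Real.continuous_cos))).add continuous_const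
    · exact fun θ => hDne θ
  rw [intervalIntegral.integral_eq_sub_of_hasDerivAt (fun θ _ => hderiv θ)
    (hcont.intervalIntegrable _ _)]
  have hexp0 : Complex.exp ((0:ℝ) * I) = 1 := by norm_num
  have hexppi : Complex.exp ((Real.pi:ℝ) * I) = -1 := by
    push_cast; exact Complex.exp_pi_mul_I
  have hexppi' : Complex.exp (-((Real.pi:ℝ) * I)) = -1 := by
    rw [Complex.exp_neg, hexppi]; norm_num
  rw [hF_def]
  simp only [Real.sin_pi, Real.sin_zero, Complex.ofReal_zero, hexppi, hexppi']
  norm_num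
  field_simp
  ring

variable {t : ℝ} {z : ℂ}

lemma hz_ne (hz : 0 < z.im) : z ≠ 0 := by
  intro h; rw [h] at hz; simp at hz

lemma hzx_ne (hz : 0 < z.im) (x : ℝ) : z - (x:ℂ) ≠ 0 := by
  intro h
  have : (z - (x:ℂ)).im = z.im := by simp
  rw [h] at this; simp at this; exact absurd this.symm (ne_of_gt hz)

lemma hslit (ht : 0 < t) (hz : 0 < z.im) : (1 - 4 * (t:ℂ) / z ^ 2) ∈ Complex.slitPlane := by
  have hz0 := hz_ne hz
  have hz2ne : z^2 ≠ 0 := pow_ne_zero 2 hz0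
  have hnsq : 0 < Complex.normSq (z^2) := Complex.normSq_pos.mpr hz2ne
  have hre2 : (4*(t:ℂ)/z^2).re = 4*t*(z.re^2 - z.im^2)/Complex.normSq (z^2) := by
    rw [Complex.div_re]; simp [pow_two, Complex.mul_re, Complex.mul_im]
  have him2 : (4*(t:ℂ)/z^2).im = -(8*t*z.re*z.im)/Complex.normSq (z^2) := by
    rw [Complex.div_im]; simp [pow_two, Complex.mul_re, Complex.mul_im]; ring
  rw [Complex.mem_slitPlane_iff]
  by_cases hre : z.re = 0
  · left
    have h0 : (1 - 4*(t:ℂ)/z^2).re = 1 - (4*(t:ℂ)/z^2).re := by simp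
    rw [h0, hre2, hre]
    have hnum : 4*t*((0:ℝ)^2 - z.im^2) < 0 := by nlinarith [pow_pos hz 2]
    have := div_neg_of_neg_of_pos hnum hnsq
    linarith
  · right
    have h0 : (1 - 4*(t:ℂ)/z^2).im = -(4*(t:ℂ)/z^2).im := by simp
    rw [h0, him2, neg_div, neg_neg]
    have hnum : 8*t*z.re*z.im ≠ 0 :=
      mul_ne_zero (mul_ne_zero (by positivity) hre) (ne_of_gt hz)
    exact div_ne_zero hnum (ne_of_gt hnsq)

lemma hw_ne (ht : 0 < t) (hz : 0 < z.im) : (1 - 4 * (t:ℂ) / z ^ 2) ≠ 0 :=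
  Complex.slitPlane_ne_zero (hslit ht hz)

lemma hs_sq (ht : 0 < t) (hz : 0 < z.im) : (sqrtShifted t z)^2 = z^2 - 4*(t:ℂ) := by
  have hw0 := hw_ne ht hz
  have hz0 := hz_ne hz
  have h12 : ((1 - 4*(t:ℂ)/z^2) ^ ((1:ℂ)/2)) * ((1 - 4*(t:ℂ)/z^2) ^ ((1:ℂ)/2))
      = 1 - 4*(t:ℂ)/z^2 := by
    rw [← Complex.cpow_add _ _ hw0]; norm_num
  rw [sqrtShifted, mul_pow, pow_two ((1 - 4*(t:ℂ)/z^2) ^ ((1:ℂ)/2)), h12]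
  field_simp

lemma hw_re_pos (ht : 0 < t) (hz : 0 < z.im) :
    0 < ((1 - 4 * (t:ℂ) / z ^ 2) ^ ((1:ℂ)/2)).re := by
  have hw0 := hw_ne ht hz
  have hsl := hslit ht hz
  rw [Complex.cpow_def_of_ne_zero hw0, Complex.exp_re]
  have him : (Complex.log (1 - 4 * (t:ℂ) / z ^ 2) * ((1:ℂ)/2)).im
      = (1 - 4 * (t:ℂ) / z ^ 2).arg / 2 := by
    simp [Complex.mul_im, Complex.log_im]
    ring
  rw [him]
  have harg1 : -Real.pi < (1 - 4 * (t:ℂ) / z ^ 2).arg := Complex.neg_pi_lt_arg _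
  have harg2 : (1 - 4 * (t:ℂ) / z ^ 2).arg < Real.pi := by
    rw [Complex.arg_lt_pi_iff]
    rcases hsl with h | h
    · exact Or.inl h.le
    · exact Or.inr h
  have hcos : 0 < Real.cos ((1 - 4 * (t:ℂ) / z ^ 2).arg / 2) :=
    Real.cos_pos_of_mem_Ioo ⟨by linarith, by linarith⟩
  exact mul_pos (Real.exp_pos _) hcos

end Aux

/-- For every `t > 0` and every `z ∈ ℂ` with `Im z > 0`, the Cauchy–Stieltjes
transform of the semicircular distribution `μ_t` equals `G(t, z)`:
`∫ (z − x)⁻¹ dμ_t(x) = (z − √(z² − 4t))/(2t)`. -/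

theorem statement17 (t : ℝ) (ht : 0 < t) (z : ℂ) (hz : 0 < z.im) :
    ∫ x : ℝ, (z - (x : ℂ))⁻¹ ∂(semicircle t) = G t z := by
  have hz0 := hz_ne hz
  have ht0 : (t:ℂ) ≠ 0 := by exact_mod_cast ne_of_gt ht
  set st := Real.sqrt t with hst_def
  have hstpos : 0 < st := Real.sqrt_pos.mpr ht
  have hst2 : st^2 = t := Real.sq_sqrt ht.le
  have hst2c : ((st:ℝ):ℂ)^2 = (t:ℂ) := by exact_mod_cast congrArg Complex.ofReal hst2
  set s := sqrtShifted t z with hs_def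
  set g := G t z with hg_def
  set q : ℂ := (st:ℂ) * g with hq_def
  have hs2 : s^2 = z^2 - 4*(t:ℂ) := hs_sq ht hz
  have hG2t : 2*(t:ℂ)*g = z - s := by
    rw [hg_def, G, hs_def]; field_simp
  -- z*g = 1 + t*g^2
  have hzg : z * g = 1 + (t:ℂ)*g^2 := by
    have h4 : (z*g - (1 + (t:ℂ)*g^2)) * (4*(t:ℂ)) = 0 := by
      linear_combination (-1 : ℂ) * hs2 - (2*(t:ℂ)*g - z - s) * hG2t
    exact sub_eq_zero.mp ((mul_eq_zero.mp h4).resolve_right (by simp [ht0]))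

  have hwre : 0 < ((1 - 4 * (t:ℂ) / z ^ 2) ^ ((1:ℂ)/2)).re := hw_re_pos ht hz
  have hzs : (z - s)*(z + s) = 4*(t:ℂ) := by linear_combination (-1:ℂ)*hs2
  have hzsne : z - s ≠ 0 := by
    intro h; rw [h, zero_mul] at hzs
    exact ht0 (by linear_combination (-1/4:ℂ)*hzs)
  have habs_prod : ‖z-s‖ * ‖z+s‖ = 4*t := by
    rw [← norm_mul, hzs]
    rw [show 4*(t:ℂ) = ((4*t:ℝ):ℂ) by push_cast; ring, Complex.norm_real, Real.norm_eq_abs,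
      abs_of_pos (by linarith)]
  have hlt : ‖z-s‖ < ‖z+s‖ := by
    have hdiff : Complex.normSq (z+s) - Complex.normSq (z-s)
        = 4*(z.re*s.re + z.im*s.im) := by
      simp [Complex.normSq_apply]; ring
    have hsre : s = z * ((1 - 4 * (t:ℂ) / z ^ 2) ^ ((1:ℂ)/2)) := rfl
    have hpos : 0 < z.re*s.re + z.im*s.im := by
      rw [hsre]
      simp only [Complex.mul_re, Complex.mul_im]
      nlinarith [hwre, pow_pos hz 2, sq_nonneg z.re]
    have hlt2 : Complex.normSq (z-s) < Complex.normSq (z+s) := by linarith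
    have h2 : ‖z-s‖^2 < ‖z+s‖^2 := by
      rwa [Complex.sq_norm, Complex.sq_norm]
    exact lt_of_pow_lt_pow_left₀ 2 (norm_nonneg _) h2
  have habs_lt : ‖z-s‖ < 2*st := by
    have h0 : 0 < ‖z-s‖ := norm_pos_iff.mpr hzsne
    have h1 : ‖z-s‖^2 < (2*st)^2 := by nlinarith [habs_prod, hlt, h0, hst2]
    exact lt_of_pow_lt_pow_left₀ 2 (by positivity) h1
  have hgval : g = (z - s)/(2*(t:ℂ)) := by rw [hg_def, G, hs_def]
  have habsq : ‖q‖ < 1 := by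
    rw [hq_def, hgval, norm_mul, norm_div, Complex.norm_real, Real.norm_eq_abs, abs_of_pos hstpos]
    rw [show ‖2*(t:ℂ)‖ = 2*t from by
      rw [show 2*(t:ℂ) = ((2*t:ℝ):ℂ) by push_cast; ring, Complex.norm_real, Real.norm_eq_abs,
        abs_of_pos (by linarith)]]
    calc st * (‖z-s‖/(2*t)) = ‖z-s‖/(2*st) := by
          rw [← hst2]; field_simp
      _ < 1 := by rw [div_lt_one (by positivity)]; linarith
  have hg0 : g ≠ 0 := by
    rw [hgval]; exact div_ne_zero hzsne (by simp [ht0])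
  have hq0 : q ≠ 0 := mul_ne_zero (by exact_mod_cast ne_of_gt hstpos) hg0
  have hDg : ∀ c : ℂ, (z - 2*((st:ℝ):ℂ)*c) * g = 1 - 2*q*c + q^2 := by
    intro c
    rw [hq_def]
    linear_combination hzg - g^2 * hst2c
  -- measure-theoretic reductions
  have hρ_cont : Continuous fun x : ℝ => (2*Real.pi*t)⁻¹ * Real.sqrt (max (4*t - x^2) 0) :=
    continuous_const.mul (Real.continuous_sqrt.comp
      ((continuous_const.sub (continuous_pow 2)).max continuous_const))
  have hρ_nonneg : ∀ x : ℝ, 0 ≤ (2*Real.pi*t)⁻¹ * Real.sqrt (max (4*t - x^2) 0) :=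
    fun x => by positivity
  have hGf_cont : Continuous fun x : ℝ =>
      ((2*Real.pi*t)⁻¹ * Real.sqrt (max (4*t - x^2) 0) : ℝ) • (z - (x:ℂ))⁻¹ :=
    hρ_cont.smul ((continuous_const.sub Complex.continuous_ofReal).inv₀ (hzx_ne hz))
  have h1 : ∫ x : ℝ, (z - (x:ℂ))⁻¹ ∂(semicircle t)
      = ∫ x : ℝ, ((2*Real.pi*t)⁻¹ * Real.sqrt (max (4*t - x^2) 0) : ℝ) • (z - (x:ℂ))⁻¹ := by
    rw [semicircle]
    have hmeas : Measurable fun x : ℝ =>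
        ((2*Real.pi*t)⁻¹ * Real.sqrt (max (4*t - x^2) 0)).toNNReal :=
      hρ_cont.measurable.real_toNNReal
    rw [show (fun x : ℝ => ENNReal.ofReal ((2*Real.pi*t)⁻¹ * Real.sqrt (max (4*t - x^2) 0)))
        = (fun x : ℝ => (((2*Real.pi*t)⁻¹ * Real.sqrt (max (4*t - x^2) 0)).toNNReal : ENNReal))
        from rfl]
    rw [integral_withDensity_eq_integral_smul hmeas]
    congr 1; funext x
    rw [NNReal.smul_def, Real.coe_toNNReal _ (hρ_nonneg x)]
  rw [h1]
  have hvanish : ∀ x : ℝ, x ∉ Set.Icc (-(2*st)) (2*st) →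
      ((2*Real.pi*t)⁻¹ * Real.sqrt (max (4*t - x^2) 0) : ℝ) • (z - (x:ℂ))⁻¹ = 0 := by
    intro x hx
    have hx2 : 4*t - x^2 ≤ 0 := by
      have hx' : x < -(2*st) ∨ 2*st < x := by
        rcases lt_or_ge x (-(2*st)) with h | h
        · exact Or.inl h
        · rcases le_or_gt x (2*st) with h2 | h2
          · exact absurd (Set.mem_Icc.mpr ⟨h, h2⟩) hx
          · exact Or.inr h2
      rcases hx' with h | h <;> nlinarith [hst2]
    rw [max_eq_right hx2]
    simp
  rw [← setIntegral_eq_integral_of_forall_compl_eq_zero hvanish]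
  rw [MeasureTheory.integral_Icc_eq_integral_Ioc,
    ← intervalIntegral.integral_of_le (by linarith : -(2*st) ≤ 2*st)]
  -- substitution x = 2 st cos θ
  have hderivφ : ∀ θ ∈ Set.uIcc (0:ℝ) Real.pi,
      HasDerivAt (fun θ => 2*st*Real.cos θ) (2*st*(-Real.sin θ)) θ :=
    fun θ _ => (Real.hasDerivAt_cos θ).const_mul (2*st)
  have hsub := intervalIntegral.integral_comp_smul_deriv hderivφ
    ((continuous_const.mul Real.continuous_sin.neg).continuousOn) hGf_cont
  rw [Real.cos_zero, Real.cos_pi, mul_one, mul_neg_one] at hsub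
  rw [intervalIntegral.integral_symm, ← hsub, ← intervalIntegral.integral_neg]
  have hcongr : Set.EqOn
      (fun θ : ℝ => -((2*st*(-Real.sin θ)) •
        (((2*Real.pi*t)⁻¹ * Real.sqrt (max (4*t - (2*st*Real.cos θ)^2) 0) : ℝ)
          • (z - ((2*st*Real.cos θ : ℝ):ℂ))⁻¹)))
      (fun θ : ℝ => (Real.pi⁻¹*2 : ℝ) •
        (g * ((Real.sin θ:ℂ)^2 / (1 - 2*q*(Real.cos θ:ℂ) + q^2))))
      (Set.uIcc 0 Real.pi) := by
    intro θ hθ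
    rw [Set.uIcc_of_le Real.pi_pos.le] at hθ
    have hsin0 : 0 ≤ Real.sin θ := Real.sin_nonneg_of_nonneg_of_le_pi hθ.1 hθ.2
    simp only
    have hmax : max (4*t - (2*st*Real.cos θ)^2) 0 = (2*st*Real.sin θ)^2 := by
      have h' : 4*t - (2*st*Real.cos θ)^2 = (2*st*Real.sin θ)^2 := by
        nlinarith [Real.sin_sq_add_cos_sq θ, hst2]
      rw [h', max_eq_left (by positivity)]
    rw [hmax, Real.sqrt_sq (mul_nonneg (by positivity) hsin0)]
    have hW : ((2*st*Real.cos θ : ℝ):ℂ) = 2*((st:ℝ):ℂ)*((Real.cos θ : ℝ):ℂ) := by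
      push_cast; ring
    have hzW : z - 2*((st:ℝ):ℂ)*((Real.cos θ : ℝ):ℂ) ≠ 0 := by
      have := hzx_ne hz (2*st*Real.cos θ); rwa [hW] at this
    have hDc := hDg ((Real.cos θ : ℝ):ℂ)
    have hDne : 1 - 2*q*((Real.cos θ : ℝ):ℂ) + q^2 ≠ 0 := by
      rw [← hDc]; exact mul_ne_zero hzW hg0
    have hinv : (z - ((2*st*Real.cos θ : ℝ):ℂ))⁻¹
        = g / (1 - 2*q*((Real.cos θ : ℝ):ℂ) + q^2) := by
      rw [hW, ← hDc, mul_comm (z - 2*((st:ℝ):ℂ)*((Real.cos θ : ℝ):ℂ)) g]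
      exact (div_mul_cancel_left₀ hg0 _).symm
    rw [hinv, ← neg_smul, smul_smul]
    have hcoef : -(2*st*(-Real.sin θ)) * ((2*Real.pi*t)⁻¹ * (2*st*Real.sin θ))
        = Real.pi⁻¹*2*(Real.sin θ^2) := by
      rw [← hst2]; field_simp
    rw [hcoef, Complex.real_smul, Complex.real_smul]
    push_cast
    ring
  simp only [Function.comp]
  rw [intervalIntegral.integral_congr hcongr, intervalIntegral.integral_smul,
    intervalIntegral.integral_const_mul, keyIntegral q habsq hq0,
    Complex.real_smul]
  have hπ : ((Real.pi:ℝ):ℂ) ≠ 0 := by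
    exact_mod_cast Real.pi_ne_zero
  push_cast
  field_simp
end

section
/- For every z ∈ ℂ with Im z > 0, the function G satisfies the complex Burgers equation ∂_t G(t, z) + G(t, z)·∂_z G(t, z) = 0 for all t > 0, where ∂_t denotes the derivative with respect to the real variable t and ∂_z the complex derivative with respect to z; moreover G(t, z) → 1/z as t → 0⁺. -/
open MeasureTheory Filter

lemma slit_aux (z : ℂ) (hz : 0 < z.im) (t : ℝ) (ht : 0 < t) :
    (1 - 4 * (t:ℂ) / z ^ 2) ∈ Complex.slitPlane := by
  have hz0 : z ≠ 0 := by intro h; simp [h] at hz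
  have hns : 0 < Complex.normSq (z ^ 2) := by
    rw [Complex.normSq_pos]; exact pow_ne_zero 2 hz0
  rw [Complex.mem_slitPlane_iff]
  rcases eq_or_ne z.re 0 with hre | hre
  · left
    have h2 : (z ^ 2 : ℂ) = ((-(z.im ^ 2) : ℝ) : ℂ) := by
      apply Complex.ext <;> simp [pow_two, Complex.mul_re, Complex.mul_im, hre]
    have him : z.im ≠ 0 := ne_of_gt hz
    rw [h2]
    have h4 : 4 * (t:ℂ) / ((-(z.im ^ 2) : ℝ) : ℂ) = ((4 * t / (-(z.im ^ 2)) : ℝ) : ℂ) := by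
      push_cast; ring
    rw [h4]
    simp only [Complex.sub_re, Complex.one_re, Complex.ofReal_re]
    have : 4 * t / -(z.im ^ 2) < 0 := by
      apply div_neg_of_pos_of_neg (by linarith) (by nlinarith)
    linarith
  · right
    simp only [Complex.sub_im, Complex.one_im, Complex.div_im]
    have h1 : (4 * (t:ℂ)).im = 0 := by simp
    have h2 : (4 * (t:ℂ)).re = 4 * t := by simp
    have h3 : (z ^ 2).im = 2 * z.re * z.im := by simp [pow_two, Complex.mul_im]; ring
    rw [h1, h2, h3]
    simp only [zero_mul, zero_div, zero_sub]
    intro h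
    have h0 : 4 * t * (2 * z.re * z.im) / Complex.normSq (z ^ 2) = 0 := by linarith
    have hne : 4 * t * (2 * z.re * z.im) ≠ 0 := by positivity
    rw [div_eq_zero_iff] at h0
    rcases h0 with h' | h'
    · exact hne h'
    · exact hns.ne' h'

lemma burgers_alg (z t A B : ℂ) (hz0 : z ≠ 0) (ht0 : t ≠ 0)
    (hA2 : A * A = 1 - 4 * t / z ^ 2) (hAB : A * B = 1) :
    ((-(z * ((1:ℂ)/2 * B * (-(4 / z ^ 2)))) * (2 * t)
        - (z - z * A) * 2) / (2 * t) ^ 2)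
    + (z - z * A) / (2 * t) *
      ((1 - (1 * A + z * ((1:ℂ)/2 * B * (-(4 * t * (-(2 * z) / (z ^ 2) ^ 2)))))) / (2 * t)) = 0 := by
  have h2t : (2 * t : ℂ) ≠ 0 := by simp [ht0]
  have hA2' : z ^ 2 * (A * A) = z ^ 2 - 4 * t := by
    rw [hA2, mul_sub, mul_one, mul_div_assoc', mul_comm (z^2), mul_div_assoc, div_self (pow_ne_zero 2 hz0), mul_one]
  have e1 : -(z * ((1:ℂ)/2 * B * (-(4 / z ^ 2)))) = 2 * B / z := by
    field_simp; ring
  have e2 : z * ((1:ℂ)/2 * B * (-(4 * t * (-(2 * z) / (z ^ 2) ^ 2)))) = 4 * t * B / z ^ 2 := by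
    field_simp
  rw [e1, e2, div_mul_div_comm, div_add_div _ _ (pow_ne_zero 2 h2t) (mul_ne_zero h2t h2t),
    div_eq_zero_iff]
  left
  field_simp
  ring_nf
  linear_combination (4*t^2) * hA2' + (16*t^3) * hAB

/-- For `t > 0`, `G t z = 2/(z + sqrtShifted t z)`. -/
lemma G_eq_two_div (z : ℂ) (hz : 0 < z.im) (t : ℝ) (ht : 0 < t) :
    G t z = 2 / (z + sqrtShifted t z) := by
  have hz0 : z ≠ 0 := by intro h; simp [h] at hz
  have ht0 : (t:ℂ) ≠ 0 := by exact_mod_cast ne_of_gt ht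
  have h2t : (2 * (t:ℂ)) ≠ 0 := by simp [ht0]
  have hw0 : (1 - 4 * (t:ℂ) / z ^ 2) ≠ 0 :=
    Complex.slitPlane_ne_zero (slit_aux z hz t ht)
  set A : ℂ := (1 - 4 * (t:ℂ) / z ^ 2) ^ ((1:ℂ)/2) with hA
  have hA2 : A * A = 1 - 4 * (t:ℂ) / z ^ 2 := by
    rw [hA, ← Complex.cpow_add _ _ hw0]
    norm_num
  have hA2' : z ^ 2 * (A * A) = z ^ 2 - 4 * t := by
    rw [hA2, mul_sub, mul_one, mul_div_assoc', mul_comm (z^2), mul_div_assoc, div_self (pow_ne_zero 2 hz0), mul_one]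
  have hsum : z + z * A ≠ 0 := by
    intro h
    have hAe : z * A = -z := by linear_combination h
    have : (4 : ℂ) * t = 0 := by linear_combination hA2' + (z - z * A) * hAe
    simp [ht0] at this
  show (z - z * A) / (2 * (t:ℂ)) = 2 / (z + z * A)
  rw [div_eq_div_iff h2t hsum]
  linear_combination (-1 : ℂ) * hA2'

/-- For every `z ∈ ℂ` with `Im z > 0`, the function `G` satisfies the complex
(inviscid) Burgers equation `∂_t G(t, z) + G(t, z)·∂_z G(t, z) = 0` for all `t > 0` (where
`∂_t` is the derivative in the real variable `t` and `∂_z` the complex derivative in `z`),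
and `G(t, z) → 1/z` as `t → 0⁺`. -/
theorem statement18 (z : ℂ) (hz : 0 < z.im) :
    (∀ t : ℝ, 0 < t →
      ∃ Gt Gz : ℂ,
        HasDerivAt (fun s : ℝ => G s z) Gt t ∧
        HasDerivAt (fun w : ℂ => G t w) Gz z ∧
        Gt + G t z * Gz = 0) ∧
    Tendsto (fun t : ℝ => G t z) (nhdsWithin 0 (Set.Ioi 0)) (nhds (1 / z)) := by
  have hz0 : z ≠ 0 := by intro h; simp [h] at hz
  have hz2 : (z:ℂ) ^ 2 ≠ 0 := pow_ne_zero 2 hz0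
  constructor
  · intro t ht
    have ht0 : (t:ℂ) ≠ 0 := by exact_mod_cast ne_of_gt ht
    have hslit := slit_aux z hz t ht
    have hw0 : (1 - 4 * (t:ℂ) / z ^ 2) ≠ 0 := Complex.slitPlane_ne_zero hslit
    set A : ℂ := (1 - 4 * (t:ℂ) / z ^ 2) ^ ((1:ℂ)/2) with hAdef
    set B : ℂ := (1 - 4 * (t:ℂ) / z ^ 2) ^ ((1:ℂ)/2 - 1) with hBdef
    have hA2 : A * A = 1 - 4 * (t:ℂ) / z ^ 2 := by
      rw [hAdef, ← Complex.cpow_add _ _ hw0]; norm_num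
    have hAB : A * B = 1 := by
      rw [hAdef, hBdef, ← Complex.cpow_add _ _ hw0]; norm_num
    -- t-derivative
    have hw : HasDerivAt (fun u : ℂ => 1 - 4 * u / z ^ 2) (-(4 / z ^ 2)) (t:ℂ) := by
      simpa using (((hasDerivAt_id (t:ℂ)).const_mul 4).div_const (z^2)).const_sub 1
    have hA := hw.cpow_const (c := (1:ℂ)/2) hslit
    have hnum : HasDerivAt (fun u : ℂ => z - z * (1 - 4 * u / z ^ 2) ^ ((1:ℂ)/2))
        (-(z * ((1:ℂ)/2 * B * (-(4 / z ^ 2))))) (t:ℂ) :=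
      (hA.const_mul z).const_sub z
    have hden : HasDerivAt (fun u : ℂ => 2 * u) 2 (t:ℂ) := by
      simpa using (hasDerivAt_id (t:ℂ)).const_mul 2
    have hGt : HasDerivAt (fun u : ℂ => (z - z * (1 - 4 * u / z ^ 2) ^ ((1:ℂ)/2)) / (2 * u))
        ((-(z * ((1:ℂ)/2 * B * (-(4 / z ^ 2)))) * (2 * (t:ℂ))
          - (z - z * A) * 2) / (2 * (t:ℂ)) ^ 2) (t:ℂ) :=
      hnum.div hden (by simpa using ht0)
    have hGt' : HasDerivAt (fun s : ℝ => G s z)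
        ((-(z * ((1:ℂ)/2 * B * (-(4 / z ^ 2)))) * (2 * (t:ℂ))
          - (z - z * A) * 2) / (2 * (t:ℂ)) ^ 2) t := by
      have := hGt.comp_ofReal
      simpa [G, sqrtShifted] using this
    -- z-derivative
    have hw2 : HasDerivAt (fun w : ℂ => 1 - 4 * (t:ℂ) / w ^ 2)
        (-(4 * (t:ℂ) * (-(2 * z) / (z ^ 2) ^ 2))) z := by
      have h1 : HasDerivAt (fun w : ℂ => w ^ 2) (2 * z) z := by
        simpa using hasDerivAt_pow 2 z
      have h2 := (h1.inv hz2).const_mul (4 * (t:ℂ))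
      have := h2.const_sub 1
      simpa [div_eq_mul_inv] using this
    have hAz := hw2.cpow_const (c := (1:ℂ)/2) hslit
    have hSz : HasDerivAt (fun w : ℂ => w * (1 - 4 * (t:ℂ) / w ^ 2) ^ ((1:ℂ)/2))
        (1 * A + z * ((1:ℂ)/2 * B * (-(4 * (t:ℂ) * (-(2 * z) / (z ^ 2) ^ 2))))) z :=
      (hasDerivAt_id z).mul hAz
    have hGz : HasDerivAt (fun w : ℂ => G t w)
        ((1 - (1 * A + z * ((1:ℂ)/2 * B * (-(4 * (t:ℂ) * (-(2 * z) / (z ^ 2) ^ 2))))))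
          / (2 * (t:ℂ))) z := by
      have := ((hasDerivAt_id z).sub hSz).div_const (2 * (t:ℂ))
      simpa [G, sqrtShifted] using this
    refine ⟨_, _, hGt', hGz, ?_⟩
    have hGval : G t z = (z - z * A) / (2 * (t:ℂ)) := by
      simp [G, sqrtShifted, hAdef]
    rw [hGval]
    exact burgers_alg z t A B hz0 ht0 hA2 hAB
  · -- the limit
    have hlim : Tendsto (fun t : ℝ => 2 / (z + sqrtShifted t z))
        (nhdsWithin 0 (Set.Ioi 0)) (nhds (1 / z)) := by
      have hinner : Tendsto (fun t : ℝ => (1 - 4 * (t:ℂ) / z ^ 2))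
          (nhdsWithin 0 (Set.Ioi 0)) (nhds 1) := by
        have : Continuous (fun t : ℝ => (1 - 4 * (t:ℂ) / z ^ 2)) := by
          continuity
        have h0 : (1 - 4 * ((0:ℝ):ℂ) / z ^ 2) = 1 := by simp
        have h2 : Tendsto (fun t : ℝ => (1 - 4 * (t:ℂ) / z ^ 2))
            (nhdsWithin 0 (Set.Ioi 0)) (nhds (1 - 4 * ((0:ℝ):ℂ) / z ^ 2)) :=
          (this.tendsto 0).mono_left nhdsWithin_le_nhds
        rwa [h0] at h2
      have hcpow : ContinuousAt (fun x : ℂ => x ^ ((1:ℂ)/2)) 1 :=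
        continuousAt_id.cpow continuousAt_const Complex.one_mem_slitPlane
      have h1 : Tendsto (fun t : ℝ => (1 - 4 * (t:ℂ) / z ^ 2) ^ ((1:ℂ)/2))
          (nhdsWithin 0 (Set.Ioi 0)) (nhds 1) := by
        have := hcpow.tendsto.comp hinner
        simpa [Complex.one_cpow, Function.comp_def] using this
      have hS : Tendsto (fun t : ℝ => z + sqrtShifted t z)
          (nhdsWithin 0 (Set.Ioi 0)) (nhds (2 * z)) := by
        have := (tendsto_const_nhds (x := z)).add
          ((tendsto_const_nhds (x := z)).mul h1)
        simpa [sqrtShifted, two_mul] using this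
      have h2z : (2 * z : ℂ) ≠ 0 := by simp [hz0]
      have := (tendsto_const_nhds (x := (2:ℂ))).div hS h2z
      have heq : (2:ℂ) / (2 * z) = 1 / z := by
        field_simp
      rwa [heq] at this
    exact Filter.Tendsto.congr'
      (Filter.eventually_of_mem self_mem_nhdsWithin
        (fun t ht => (G_eq_two_div z hz t ht).symm)) hlim
end

section
/- For every t > 0 and every z ∈ ℂ with Im z > 0 and |z| > √t, the point w := z + t/z satisfies Im w > 0, the square root satisfies √(w² − 4t) = z − t/z, and consequently G(t, w) = 1/z; i.e., along the characteristic curve w = z + t/z the function G is constant: G(t, z + t/z) = G(0⁺, z) = 1/z. -/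
open MeasureTheory

lemma sqrt_of_sq {s : ℂ} (hs : 0 < s.re) : (s ^ 2) ^ ((1 : ℂ)/2) = s := by
  have he : ((1 : ℂ)/2) = (((2:ℕ) : ℂ))⁻¹ := by norm_num
  have h2 : ((s ^ 2) ^ ((1:ℂ)/2)) ^ 2 = s ^ 2 := by
    rw [he]
    exact Complex.cpow_nat_inv_pow (s^2) (n := 2) two_ne_zero
  have hre : 0 ≤ ((s ^ 2) ^ ((1:ℂ)/2)).re := by
    rw [show ((1:ℂ)/2) = (2⁻¹ : ℂ) by norm_num, Complex.cpow_inv_two_re]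
    positivity
  rcases sq_eq_sq_iff_eq_or_eq_neg.mp h2 with h | h
  · exact h
  · exfalso
    rw [h] at hre
    simp at hre
    linarith

/-- For every `t > 0` and every `z ∈ ℂ` with `Im z > 0` and `|z| > √t`, the
point `w := z + t/z` satisfies `Im w > 0`, the square root satisfies `√(w² − 4t) = z − t/z`,
and consequently `G` is constant along the characteristic curve: `G(t, z + t/z) = 1/z`. -/
theorem statement19 (t : ℝ) (ht : 0 < t) (z : ℂ) (hz : 0 < z.im)
    (habs : Real.sqrt t < ‖z‖) :
    0 < (z + (t : ℂ) / z).im ∧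
    sqrtShifted t (z + (t : ℂ) / z) = z - (t : ℂ) / z ∧
    G t (z + (t : ℂ) / z) = 1 / z := by
  have hz0 : z ≠ 0 := by
    intro h; rw [h] at hz; simp at hz
  have hns : t < Complex.normSq z := by
    have h1 : Real.sqrt t * Real.sqrt t < ‖z‖ * ‖z‖ :=
      mul_self_lt_mul_self (Real.sqrt_nonneg t) habs
    rw [Complex.normSq_eq_norm_sq, sq]
    rwa [Real.mul_self_sqrt ht.le] at h1
  have hnpos : (0:ℝ) < Complex.normSq z := Complex.normSq_pos.mpr hz0
  have him : 0 < (z + (t : ℂ) / z).im := by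
    have : (z + (t : ℂ) / z).im = z.im * (1 - t / Complex.normSq z) := by
      simp [Complex.add_im, Complex.div_im, Complex.ofReal_im, Complex.ofReal_re]
      field_simp
      ring
    rw [this]
    have : 0 < 1 - t / Complex.normSq z := by
      rw [sub_pos, div_lt_one hnpos]; exact hns
    positivity
  set w := z + (t : ℂ) / z with hw
  have hw0 : w ≠ 0 := by
    intro h
    rw [h] at him; simp at him
  have hwz : w = (z ^ 2 + t) / z := by
    rw [hw]; field_simp
  have hden : z ^ 2 + (t:ℂ) ≠ 0 := by
    intro h
    apply hw0
    rw [hwz, h, zero_div]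
  set s : ℂ := (z - (t : ℂ) / z) / w with hs
  have hveq : s = (z ^ 2 - t) / (z ^ 2 + t) := by
    rw [hs, hwz, eq_div_iff hden]
    field_simp
  have key : 1 - 4 * (t : ℂ) / w ^ 2 = s ^ 2 := by
    rw [hveq, hwz]
    field_simp [hden]
    ring
  have hsre : 0 < s.re := by
    rw [hveq, Complex.div_re, ← add_div]
    have hdpos : 0 < Complex.normSq (z ^ 2 + (t:ℂ)) := Complex.normSq_pos.mpr hden
    apply div_pos _ hdpos
    have : (z ^ 2 - (t:ℂ)).re * (z ^ 2 + (t:ℂ)).re + (z ^ 2 - (t:ℂ)).im * (z ^ 2 + (t:ℂ)).im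
        = Complex.normSq z * Complex.normSq z - t * t := by
      simp [Complex.normSq_apply, Complex.sub_re, Complex.add_re, Complex.sub_im, Complex.add_im,
        Complex.ofReal_re, Complex.ofReal_im, pow_two, Complex.mul_re, Complex.mul_im]
      ring
    rw [this]
    nlinarith
  have hsqrt : sqrtShifted t w = z - (t : ℂ) / z := by
    rw [sqrtShifted, key, sqrt_of_sq hsre, hs]
    field_simp
  refine ⟨him, hsqrt, ?_⟩
  rw [G, hsqrt, hw]
  have ht0 : (t : ℂ) ≠ 0 := by exact_mod_cast ht.ne'
  field_simp
  ring
end
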